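/- arXiv:1811.11305 — 5 statements merged into one kernel-verified Lean document; each statement's English description precedes it below -/
import Mathlib

section
/- Let a and b be nonzero integers, n a positive integer such that aj + b ≠ 0 for every integer j with 1 ≤ j ≤ n, m a nonzero complex number, and k a positive integer. Writing HP_{r}(n) = ∑_{j=1}^{n} 1/(aj+b)^{r}, one has ∑_{j=1}^{n} (1/(aj+b)^{2k})·cos(2π(aj+b)/m) = -(1/(2b^{2k}))( cos(2πb/m) - ∑_{j=0}^{k} (-1)^{j}(2πb/m)^{2j}/(2j)! ) + (1/(2(an+b)^{2k}))( cos(2π(an+b)/m) - ∑_{j=0}^{k} (-1)^{j}(2π(an+b)/m)^{2j}/(2j)! ) + ∑_{j=1}^{k} ((-1)^{k-j}(2π/m)^{2k-2j}/(2k-2j)!)·HP_{2j}(n) + ((-1)^{k}(2π/m)^{2k}/(2(2k-1)!)) ∫_{0}^{1} (1-u)^{2k-1}·( sin(2π(an+b)u/m) - sin(2πbu/m) )·cot(πau/m) du. -/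
open Real Complex

noncomputable section StmtAux
open intervalIntegral MeasureTheory Finset

private lemma cont_pow_cos (x : ℂ) (N : ℕ) :
    Continuous (fun u : ℝ => (1 - (u:ℂ))^N * Complex.cos (x * u)) := by
  fun_prop

private lemma cont_pow_sin (x : ℂ) (N : ℕ) :
    Continuous (fun u : ℝ => (1 - (u:ℂ))^N * Complex.sin (x * u)) := by
  fun_prop

private lemma deriv_sin_aux (x : ℂ) (hx : x ≠ 0) (u : ℝ) :
    HasDerivAt (fun u : ℝ => Complex.sin (x * u) / x) (Complex.cos (x * u)) u := by
  have h1 : HasDerivAt (fun w : ℂ => Complex.sin (x * w) / x)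
      (Complex.cos (x * u) * x / x) (u : ℂ) := by
    have := ((Complex.hasDerivAt_sin (x * u)).comp (u:ℂ)
      ((hasDerivAt_id (u:ℂ)).const_mul x)).div_const x
    simpa [mul_comm] using this
  rw [mul_div_assoc, div_self hx, mul_one] at h1
  exact h1.comp_ofReal

private lemma deriv_cos_aux (x : ℂ) (hx : x ≠ 0) (u : ℝ) :
    HasDerivAt (fun u : ℝ => -Complex.cos (x * u) / x) (Complex.sin (x * u)) u := by
  have h1 : HasDerivAt (fun w : ℂ => -Complex.cos (x * w) / x)
      (Complex.sin (x * u) * x / x) (u : ℂ) := by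
    have := (((Complex.hasDerivAt_cos (x * u)).comp (u:ℂ)
      ((hasDerivAt_id (u:ℂ)).const_mul x)).neg).div_const x
    simpa [mul_comm] using this
  rw [mul_div_assoc, div_self hx, mul_one] at h1
  exact h1.comp_ofReal

private lemma ibp_cos (x : ℂ) (hx : x ≠ 0) (N : ℕ) :
    ∫ u in (0:ℝ)..1, (1 - (u:ℂ))^(N+1) * Complex.cos (x * u)
      = ((N+1 : ℂ)/x) * ∫ u in (0:ℝ)..1, (1 - (u:ℂ))^N * Complex.sin (x * u) := by
  have der1 : ∀ u : ℝ, u ∈ Set.uIcc (0:ℝ) 1 →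
      HasDerivAt (fun u : ℝ => (1 - (u:ℂ))^(N+1))
        (-(N+1) * (1 - (u:ℂ))^N) u := by
    intro u _
    have b : HasDerivAt (fun u : ℝ => (1 - (u:ℂ))) (-1) u := by
      simpa using ((Complex.ofRealCLM.hasDerivAt (x := u)).const_sub 1)
    have := HasDerivAt.comp u (hasDerivAt_pow (N+1) (1 - (u:ℂ))) b
    convert this using 1
    push_cast
    · rfl
    · rfl
    · rw [show N + 1 - 1 = N by omega]; push_cast; ring
  have := integral_mul_deriv_eq_deriv_mul der1
    (fun u _ => deriv_sin_aux x hx u)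
    (by apply Continuous.intervalIntegrable; fun_prop)
    (by apply Continuous.intervalIntegrable; fun_prop)
  rw [this]
  simp only [Complex.ofReal_one, Complex.ofReal_zero, mul_zero, mul_one, Complex.sin_zero,
    sub_self, zero_pow (Nat.succ_ne_zero N), zero_mul, zero_div, mul_zero, zero_sub]
  rw [← intervalIntegral.integral_const_mul, ← intervalIntegral.integral_neg]
  refine integral_congr fun u _ => ?_
  field_simp

private lemma ibp_sin (x : ℂ) (hx : x ≠ 0) (N : ℕ) :
    ∫ u in (0:ℝ)..1, (1 - (u:ℂ))^(N+1) * Complex.sin (x * u)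
      = 1/x - ((N+1 : ℂ)/x) * ∫ u in (0:ℝ)..1, (1 - (u:ℂ))^N * Complex.cos (x * u) := by
  have der1 : ∀ u : ℝ, u ∈ Set.uIcc (0:ℝ) 1 →
      HasDerivAt (fun u : ℝ => (1 - (u:ℂ))^(N+1))
        (-(N+1) * (1 - (u:ℂ))^N) u := by
    intro u _
    have b : HasDerivAt (fun u : ℝ => (1 - (u:ℂ))) (-1) u := by
      simpa using ((Complex.ofRealCLM.hasDerivAt (x := u)).const_sub 1)
    have := HasDerivAt.comp u (hasDerivAt_pow (N+1) (1 - (u:ℂ))) b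
    convert this using 1
    push_cast
    · rfl
    · rfl
    · rw [show N + 1 - 1 = N by omega]; push_cast; ring
  have := integral_mul_deriv_eq_deriv_mul der1
    (fun u _ => deriv_cos_aux x hx u)
    (by apply Continuous.intervalIntegrable; fun_prop)
    (by apply Continuous.intervalIntegrable; fun_prop)
  rw [this]
  simp only [Complex.ofReal_one, Complex.ofReal_zero, mul_zero, mul_one, Complex.cos_zero,
    sub_self, zero_pow (Nat.succ_ne_zero N), zero_mul, sub_zero, one_pow, one_mul, zero_sub,
    neg_div, neg_neg]
  congr 1
  rw [← intervalIntegral.integral_const_mul]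
  refine integral_congr fun u _ => ?_
  field_simp

private lemma int_sin0 (x : ℂ) (hx : x ≠ 0) :
    ∫ u in (0:ℝ)..1, Complex.sin (x * u) = (1 - Complex.cos x)/x := by
  have := integral_eq_sub_of_hasDerivAt (a := (0:ℝ)) (b := 1)
    (f := fun u : ℝ => -Complex.cos (x * u) / x)
    (f' := fun u : ℝ => Complex.sin (x * u))
    (fun u _ => deriv_cos_aux x hx u)
    (by apply Continuous.intervalIntegrable; fun_prop)
  rw [this]
  push_cast
  rw [mul_one, mul_zero, Complex.cos_zero]
  ring

private lemma taylor_cos (x : ℂ) (hx : x ≠ 0) (k : ℕ) (hk : 1 ≤ k) :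
    (-1:ℂ)^k * x^(2*k) / (Nat.factorial (2*k-1)) *
      ∫ u in (0:ℝ)..1, (1 - (u:ℂ))^(2*k-1) * Complex.cos (x * u)
    = Complex.cos x - ∑ j ∈ Finset.range k, (-1:ℂ)^j * x^(2*j) / (Nat.factorial (2*j)) := by
  induction k, hk using Nat.le_induction with
  | base =>
    rw [show 2*1-1 = 0+1 from rfl, ibp_cos x hx 0]
    simp only [pow_zero, one_mul]
    rw [int_sin0 x hx]
    simp only [Finset.sum_range_one, pow_zero, Nat.factorial, Nat.cast_one, mul_zero]
    field_simp
    ring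
  | succ k hk ih =>
    have h1 : 2*(k+1)-1 = (2*k-1+1)+1 := by omega
    rw [h1, ibp_cos x hx (2*k-1+1), ibp_sin x hx (2*k-1), Finset.sum_range_succ,
      sub_add_eq_sub_sub, ← ih]
    set I := ∫ u in (0:ℝ)..1, (1 - (u:ℂ))^(2*k-1) * Complex.cos (x * u) with hI
    have hf1 : (Nat.factorial (2*k-1+1+1) : ℂ)
        = ((2*k-1:ℕ)+2) * ((2*k-1:ℕ)+1) * Nat.factorial (2*k-1) := by
      push_cast [Nat.factorial_succ]
      ring
    have hf2 : (Nat.factorial (2*k) : ℂ) = ((2*k-1:ℕ)+1) * Nat.factorial (2*k-1) := by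
      rw [show 2*k = (2*k-1)+1 by omega]
      push_cast [Nat.factorial_succ]
      ring
    have hp : x^(2*(k+1)) = x^(2*k) * x^2 := by
      rw [show 2*(k+1) = 2*k+2 by ring, pow_add]
    have hfne : (Nat.factorial (2*k-1) : ℂ) ≠ 0 :=
      Nat.cast_ne_zero.mpr (Nat.factorial_ne_zero _)
    have hc : ((2*k-1+1:ℕ):ℂ) = ((2*k-1:ℕ):ℂ) + 1 := by push_cast; ring
    have h3 : ((2*k-1:ℕ):ℂ) + 1 ≠ 0 := by
      rw [← hc]; exact_mod_cast Nat.succ_ne_zero (2*k-1)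
    have h4 : ((2*k-1:ℕ):ℂ) + 2 ≠ 0 := by
      have : ((2*k-1+2:ℕ):ℂ) ≠ 0 := Nat.cast_ne_zero.mpr (by omega)
      push_cast at this
      convert this using 2
    rw [hf1, hf2, hp, hc]
    generalize hF : ((Nat.factorial (2*k-1):ℕ):ℂ) = F at hfne ⊢
    generalize hcc : ((2*k-1:ℕ):ℂ) = c at h3 h4 ⊢
    field_simp
    ring

private lemma trig_aux (Y s : ℂ) (hs : Complex.sin s ≠ 0) :
    (Complex.sin (Y + 2*s) - Complex.sin Y) * Complex.cot s
      = Complex.cos (Y + 2*s) + Complex.cos Y := by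
  rw [Complex.sin_sub_sin, Complex.cos_add_cos, Complex.cot_eq_cos_div_sin,
    show (Y+2*s-Y)/2 = s by ring, show (Y+2*s+Y)/2 = Y+s by ring]
  field_simp

private lemma key1 (m : ℂ) (hm : m ≠ 0) (k : ℕ) (hk : 1 ≤ k) (z : ℂ) (hz : z ≠ 0)
    (hx : (2*(π:ℂ)*z/m) ≠ 0) :
    ((-1:ℂ)^k * (2*(π:ℂ)/m)^(2*k) / (2 * (Nat.factorial (2*k-1)))) *
      ∫ u in (0:ℝ)..1, (1-(u:ℂ))^(2*k-1) * Complex.cos (2*(π:ℂ)*z*(u:ℝ)/m)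
    = (1/2) * ((1/z^(2*k)) * (Complex.cos (2*(π:ℂ)*z/m)
        - ∑ i ∈ Finset.range k, (-1:ℂ)^i * (2*(π:ℂ)*z/m)^(2*i)/(Nat.factorial (2*i)))) := by
  have harg : ∀ u : ℝ, (2*(π:ℂ)*z*(u:ℝ)/m) = (2*(π:ℂ)*z/m) * (u:ℝ) := by
    intro u; ring
  simp only [harg]
  have ht := taylor_cos (2*(π:ℂ)*z/m) hx k hk
  rw [← ht]
  have hpow : (2*(π:ℂ)*z/m)^(2*k) = (2*(π:ℂ)/m)^(2*k) * z^(2*k) := by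
    rw [← mul_pow]; congr 1; ring
  rw [hpow]
  have hfne : (Nat.factorial (2*k-1) : ℂ) ≠ 0 := Nat.cast_ne_zero.mpr (Nat.factorial_ne_zero _)
  have hzk : z^(2*k) ≠ 0 := pow_ne_zero _ hz
  generalize ((Nat.factorial (2*k-1):ℕ):ℂ) = F at hfne ⊢
  generalize (∫ u in (0:ℝ)..1, (1-(u:ℂ))^(2*k-1) * Complex.cos ((2*(π:ℂ)*z/m) * (u:ℝ))) = I
  generalize hZ : z^(2*k) = Z at hzk ⊢
  apply mul_left_cancel₀ hzk
  field_simp [hzk, hm, hfne]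

private lemma keyP (m : ℂ) (hm : m ≠ 0) (k : ℕ) (z : ℂ) (hz : z ≠ 0) :
    (1/z^(2*k)) * (Complex.cos (2*(π:ℂ)*z/m)
        - ∑ i ∈ Finset.range k, (-1:ℂ)^i * (2*(π:ℂ)*z/m)^(2*i)/(Nat.factorial (2*i)))
    = (1/z^(2*k)) * (Complex.cos (2*(π:ℂ)*z/m)
        - ∑ i ∈ Finset.range (k+1), (-1:ℂ)^i * (2*(π:ℂ)*z/m)^(2*i)/(Nat.factorial (2*i)))
      + (-1:ℂ)^k * (2*(π:ℂ)/m)^(2*k) / (Nat.factorial (2*k)) := by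
  rw [Finset.sum_range_succ]
  have hpow : (2*(π:ℂ)*z/m)^(2*k) = (2*(π:ℂ)/m)^(2*k) * z^(2*k) := by
    rw [← mul_pow]; congr 1; ring
  rw [hpow]
  have hfne : (Nat.factorial (2*k) : ℂ) ≠ 0 := Nat.cast_ne_zero.mpr (Nat.factorial_ne_zero _)
  have hzk : z^(2*k) ≠ 0 := pow_ne_zero _ hz
  generalize ((Nat.factorial (2*k):ℕ):ℂ) = F at hfne ⊢
  generalize hZ : z^(2*k) = Z at hzk ⊢
  apply mul_left_cancel₀ hzk
  field_simp [hzk, hm, hfne]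
  ring

private lemma sum_Icc_one {M : Type*} [AddCommMonoid M] (n : ℕ) (f : ℕ → M) :
    ∑ j ∈ Finset.Icc 1 n, f j = ∑ j ∈ Finset.range n, f (j+1) := by
  rw [← Finset.Ico_add_one_right_eq_Icc, Finset.sum_Ico_eq_sum_range]
  simp [add_comm]

private lemma sin_ne_ae (a : ℤ) (ha : a ≠ 0) (m : ℂ) (hm : m ≠ 0) :
    ∀ᵐ u : ℝ, Complex.sin ((π:ℂ) * (a:ℂ) * (u:ℝ) / m) ≠ 0 := by
  have hπ : ((π:ℝ):ℂ) ≠ 0 := Complex.ofReal_ne_zero.mpr Real.pi_ne_zero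
  have ha' : ((a:ℤ):ℂ) ≠ 0 := Int.cast_ne_zero.mpr ha
  rw [MeasureTheory.ae_iff]
  simp only [not_not]
  refine measure_mono_null (t := Set.range (fun ℓ : ℤ => (((ℓ:ℂ) * m / (a:ℂ)).re))) ?_
    ((Set.countable_range _).measure_zero _)
  · intro u hu
    simp only [Set.mem_setOf_eq] at hu
    obtain ⟨ℓ, hℓ⟩ := Complex.sin_eq_zero_iff.mp hu
    refine ⟨ℓ, ?_⟩
    have h2 : (π:ℂ) * ((a:ℂ)*(u:ℝ) - (ℓ:ℂ)*m) = 0 := by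
      have hm' := hℓ
      field_simp at hm'
      linear_combination (π:ℂ) * hm'
    have h3 : (a:ℂ)*(u:ℝ) = (ℓ:ℂ)*m := by
      rcases mul_eq_zero.mp h2 with h | h
      · exact absurd h hπ
      · exact sub_eq_zero.mp h
    have h4 : ((u:ℝ):ℂ) = (ℓ:ℂ)*m/(a:ℂ) := by
      rw [eq_div_iff ha']
      linear_combination h3
    show ((ℓ:ℂ)*m/(a:ℂ)).re = u
    rw [← h4]
    exact (Complex.ofReal_re u)

end StmtAux

theorem stmt_14 (a b : ℤ) (ha : a ≠ 0) (hb : b ≠ 0) (n : ℕ) (hn : 0 < n)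
    (h : ∀ j : ℤ, 1 ≤ j → j ≤ n → a * j + b ≠ 0) (m : ℂ) (hm : m ≠ 0)
    (k : ℕ) (hk : 0 < k) :
    ∑ j ∈ Finset.Icc 1 n,
        (1 : ℂ) / (a * j + b) ^ (2 * k) * Complex.cos (2 * π * ((a : ℂ) * j + b) / m) =
      -(1 / (2 * (b : ℂ) ^ (2 * k))) *
          (Complex.cos (2 * π * (b : ℂ) / m) -
            ∑ j ∈ Finset.range (k + 1),
              (-1 : ℂ) ^ j * (2 * π * (b : ℂ) / m) ^ (2 * j) / (Nat.factorial (2 * j)))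
      + (1 / (2 * ((a : ℂ) * n + b) ^ (2 * k))) *
          (Complex.cos (2 * π * ((a : ℂ) * n + b) / m) -
            ∑ j ∈ Finset.range (k + 1),
              (-1 : ℂ) ^ j * (2 * π * ((a : ℂ) * n + b) / m) ^ (2 * j) /
                (Nat.factorial (2 * j)))
      + (∑ j ∈ Finset.Icc 1 k,
          ((-1 : ℂ) ^ (k - j) * (2 * π / m) ^ (2 * k - 2 * j) /
              (Nat.factorial (2 * k - 2 * j))) *
            ∑ i ∈ Finset.Icc 1 n, (1 : ℂ) / (a * i + b) ^ (2 * j))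
      + ((-1 : ℂ) ^ k * (2 * π / m) ^ (2 * k) / (2 * (Nat.factorial (2 * k - 1)))) *
          ∫ u in (0:ℝ)..1,
            (1 - (u : ℂ)) ^ (2 * k - 1) *
              (Complex.sin (2 * π * ((a : ℂ) * n + b) * u / m)
                - Complex.sin (2 * π * (b : ℂ) * u / m)) *
              Complex.cot (π * (a : ℂ) * u / m) := by
  have hπ : ((π:ℝ):ℂ) ≠ 0 := Complex.ofReal_ne_zero.mpr Real.pi_ne_zero
  have hbC : ((b:ℤ):ℂ) ≠ 0 := Int.cast_ne_zero.mpr hb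
  have hc : ∀ j : ℕ, j ≤ n → ((a:ℂ)*(j:ℂ) + (b:ℂ)) ≠ 0 := by
    intro j hj
    rcases Nat.eq_zero_or_pos j with rfl | hj1
    · simpa using hbC
    · have h1 : (a * (j:ℤ) + b) ≠ 0 := h j (by exact_mod_cast hj1) (by exact_mod_cast hj)
      have h2 : ((a * (j:ℤ) + b : ℤ) : ℂ) ≠ 0 := Int.cast_ne_zero.mpr h1
      push_cast at h2
      exact h2
  have hx : ∀ j : ℕ, j ≤ n → (2*(π:ℂ)*((a:ℂ)*(j:ℂ)+(b:ℂ))/m) ≠ 0 := by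
    intro j hj
    exact div_ne_zero (mul_ne_zero (mul_ne_zero two_ne_zero hπ) (hc j hj)) hm
  -- a.e. pointwise identity
  have hae : ∀ᵐ u : ℝ, u ∈ Set.uIoc (0:ℝ) 1 →
      (1 - (u:ℂ))^(2*k-1) *
        (Complex.sin (2*(π:ℂ)*((a:ℂ)*(n:ℂ)+(b:ℂ))*(u:ℝ)/m)
          - Complex.sin (2*(π:ℂ)*(b:ℂ)*(u:ℝ)/m)) *
        Complex.cot ((π:ℂ)*(a:ℂ)*(u:ℝ)/m)
      = ∑ j ∈ Finset.range n,
          ((1-(u:ℂ))^(2*k-1) * Complex.cos (2*(π:ℂ)*((a:ℂ)*((j+1:ℕ):ℂ)+(b:ℂ))*(u:ℝ)/m)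
            + (1-(u:ℂ))^(2*k-1) * Complex.cos (2*(π:ℂ)*((a:ℂ)*((j:ℕ):ℂ)+(b:ℂ))*(u:ℝ)/m)) := by
    filter_upwards [sin_ne_ae a ha m hm] with u hu _
    have htel : Complex.sin (2*(π:ℂ)*((a:ℂ)*(n:ℂ)+(b:ℂ))*(u:ℝ)/m)
          - Complex.sin (2*(π:ℂ)*(b:ℂ)*(u:ℝ)/m)
        = ∑ j ∈ Finset.range n,
            (Complex.sin (2*(π:ℂ)*((a:ℂ)*((j+1:ℕ):ℂ)+(b:ℂ))*(u:ℝ)/m)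
              - Complex.sin (2*(π:ℂ)*((a:ℂ)*((j:ℕ):ℂ)+(b:ℂ))*(u:ℝ)/m)) := by
      rw [Finset.sum_range_sub
        (f := fun j : ℕ => Complex.sin (2*(π:ℂ)*((a:ℂ)*((j:ℕ):ℂ)+(b:ℂ))*(u:ℝ)/m))]
      norm_num
    rw [htel, Finset.mul_sum, Finset.sum_mul]
    refine Finset.sum_congr rfl fun j _ => ?_
    have harg : (2*(π:ℂ)*((a:ℂ)*(((j+1):ℕ):ℂ)+(b:ℂ))*(u:ℝ)/m)
        = (2*(π:ℂ)*((a:ℂ)*((j:ℕ):ℂ)+(b:ℂ))*(u:ℝ)/m) + 2*((π:ℂ)*(a:ℂ)*(u:ℝ)/m) := by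
      push_cast
      ring
    rw [mul_assoc, harg, trig_aux _ _ hu]
    ring
  have hint : (∫ u in (0:ℝ)..1, (1 - (u:ℂ))^(2*k-1) *
        (Complex.sin (2*(π:ℂ)*((a:ℂ)*(n:ℂ)+(b:ℂ))*(u:ℝ)/m)
          - Complex.sin (2*(π:ℂ)*(b:ℂ)*(u:ℝ)/m)) *
        Complex.cot ((π:ℂ)*(a:ℂ)*(u:ℝ)/m))
      = ∑ j ∈ Finset.range n,
          ((∫ u in (0:ℝ)..1, (1-(u:ℂ))^(2*k-1) * Complex.cos (2*(π:ℂ)*((a:ℂ)*((j+1:ℕ):ℂ)+(b:ℂ))*(u:ℝ)/m))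
            + ∫ u in (0:ℝ)..1, (1-(u:ℂ))^(2*k-1) * Complex.cos (2*(π:ℂ)*((a:ℂ)*((j:ℕ):ℂ)+(b:ℂ))*(u:ℝ)/m)) := by
    rw [intervalIntegral.integral_congr_ae hae]
    rw [intervalIntegral.integral_finset_sum
      (fun j _ => by apply Continuous.intervalIntegrable; fun_prop)]
    exact Finset.sum_congr rfl fun j _ => intervalIntegral.integral_add
      (by apply Continuous.intervalIntegrable; fun_prop)
      (by apply Continuous.intervalIntegrable; fun_prop)
  rw [hint]
  -- split each LHS summand
  have hsplit : ∀ j ∈ Finset.Icc 1 n,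
      (1 : ℂ) / ((a:ℂ)*(j:ℂ) + (b:ℂ)) ^ (2*k) * Complex.cos (2*(π:ℂ)*((a:ℂ)*(j:ℂ)+(b:ℂ))/m)
      = (1/((a:ℂ)*(j:ℂ)+(b:ℂ))^(2*k)) * (Complex.cos (2*(π:ℂ)*((a:ℂ)*(j:ℂ)+(b:ℂ))/m)
          - ∑ i ∈ Finset.range k,
              (-1:ℂ)^i * (2*(π:ℂ)*((a:ℂ)*(j:ℂ)+(b:ℂ))/m)^(2*i)/(Nat.factorial (2*i)))
        + ∑ i ∈ Finset.range k,
            ((-1:ℂ)^i * (2*(π:ℂ)/m)^(2*i)/(Nat.factorial (2*i)))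
              * ((1:ℂ)/((a:ℂ)*(j:ℂ)+(b:ℂ))^(2*(k-i))) := by
    intro j hj
    obtain ⟨hj1, hjn⟩ := Finset.mem_Icc.mp hj
    have hcj := hc j hjn
    have hAS : (1/((a:ℂ)*(j:ℂ)+(b:ℂ))^(2*k)) *
        (∑ i ∈ Finset.range k,
          (-1:ℂ)^i * (2*(π:ℂ)*((a:ℂ)*(j:ℂ)+(b:ℂ))/m)^(2*i)/(Nat.factorial (2*i)))
        = ∑ i ∈ Finset.range k,
            ((-1:ℂ)^i * (2*(π:ℂ)/m)^(2*i)/(Nat.factorial (2*i)))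
              * ((1:ℂ)/((a:ℂ)*(j:ℂ)+(b:ℂ))^(2*(k-i))) := by
      rw [Finset.mul_sum]
      refine Finset.sum_congr rfl fun i hi => ?_
      have hik : i < k := Finset.mem_range.mp hi
      have hcp : ((a:ℂ)*(j:ℂ)+(b:ℂ))^(2*k)
          = ((a:ℂ)*(j:ℂ)+(b:ℂ))^(2*i) * ((a:ℂ)*(j:ℂ)+(b:ℂ))^(2*(k-i)) := by
        rw [← pow_add]; congr 1; omega
      have hpw : (2*(π:ℂ)*((a:ℂ)*(j:ℂ)+(b:ℂ))/m)^(2*i)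
          = (2*(π:ℂ)/m)^(2*i) * ((a:ℂ)*(j:ℂ)+(b:ℂ))^(2*i) := by
        rw [← mul_pow]; congr 1; ring
      rw [hpw, hcp]
      have h1 : ((a:ℂ)*(j:ℂ)+(b:ℂ))^(2*i) ≠ 0 := pow_ne_zero _ hcj
      have h2 : ((a:ℂ)*(j:ℂ)+(b:ℂ))^(2*(k-i)) ≠ 0 := pow_ne_zero _ hcj
      have hfne : ((Nat.factorial (2*i) : ℕ) : ℂ) ≠ 0 :=
        Nat.cast_ne_zero.mpr (Nat.factorial_ne_zero _)
      generalize ((Nat.factorial (2*i):ℕ):ℂ) = F at hfne ⊢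
      generalize hW : (2*(π:ℂ)/m)^(2*i) = W
      generalize hZ1 : ((a:ℂ)*(j:ℂ)+(b:ℂ))^(2*i) = Z1 at h1 ⊢
      generalize hZ2 : ((a:ℂ)*(j:ℂ)+(b:ℂ))^(2*(k-i)) = Z2 at h2 ⊢
      field_simp
    linear_combination hAS
  have hsum1 : (∑ j ∈ Finset.Icc 1 n,
      (1:ℂ)/((a:ℂ)*(j:ℂ)+(b:ℂ))^(2*k) * Complex.cos (2*(π:ℂ)*((a:ℂ)*(j:ℂ)+(b:ℂ))/m))
      = (∑ j ∈ Finset.Icc 1 n, (1/((a:ℂ)*((j:ℂ))+(b:ℂ))^(2*k)) * (Complex.cos (2*(π:ℂ)*((a:ℂ)*((j:ℂ))+(b:ℂ))/m) - ∑ i ∈ Finset.range k, (-1:ℂ)^i * (2*(π:ℂ)*((a:ℂ)*((j:ℂ))+(b:ℂ))/m)^(2*i)/(Nat.factorial (2*i))))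
        + ∑ j ∈ Finset.Icc 1 n, ∑ i ∈ Finset.range k, ((-1:ℂ)^i * (2*(π:ℂ)/m)^(2*i)/(Nat.factorial (2*i))) * ((1:ℂ)/((a:ℂ)*(j:ℂ)+(b:ℂ))^(2*(k-i))) := by
    rw [← Finset.sum_add_distrib]
    exact Finset.sum_congr rfl hsplit
  have hIccG : (∑ j ∈ Finset.Icc 1 n, (1/((a:ℂ)*((j:ℂ))+(b:ℂ))^(2*k)) * (Complex.cos (2*(π:ℂ)*((a:ℂ)*((j:ℂ))+(b:ℂ))/m) - ∑ i ∈ Finset.range k, (-1:ℂ)^i * (2*(π:ℂ)*((a:ℂ)*((j:ℂ))+(b:ℂ))/m)^(2*i)/(Nat.factorial (2*i))))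
      = ∑ j ∈ Finset.range n, (1/((a:ℂ)*(((j+1:ℕ):ℂ))+(b:ℂ))^(2*k)) * (Complex.cos (2*(π:ℂ)*((a:ℂ)*(((j+1:ℕ):ℂ))+(b:ℂ))/m) - ∑ i ∈ Finset.range k, (-1:ℂ)^i * (2*(π:ℂ)*((a:ℂ)*(((j+1:ℕ):ℂ))+(b:ℂ))/m)^(2*i)/(Nat.factorial (2*i))) :=
    sum_Icc_one n (fun j => (1/((a:ℂ)*((j:ℂ))+(b:ℂ))^(2*k)) * (Complex.cos (2*(π:ℂ)*((a:ℂ)*((j:ℂ))+(b:ℂ))/m) - ∑ i ∈ Finset.range k, (-1:ℂ)^i * (2*(π:ℂ)*((a:ℂ)*((j:ℂ))+(b:ℂ))/m)^(2*i)/(Nat.factorial (2*i))))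
  have hswap : (∑ j ∈ Finset.Icc 1 n, ∑ i ∈ Finset.range k, ((-1:ℂ)^i * (2*(π:ℂ)/m)^(2*i)/(Nat.factorial (2*i))) * ((1:ℂ)/((a:ℂ)*(j:ℂ)+(b:ℂ))^(2*(k-i))))
      = ∑ i ∈ Finset.Icc 1 k, ((-1:ℂ)^(k-i) * (2*(π:ℂ)/m)^(2*k-2*i)/(Nat.factorial (2*k-2*i))) *
          ∑ j ∈ Finset.Icc 1 n, (1:ℂ)/((a:ℂ)*(j:ℂ)+(b:ℂ))^(2*i) := by
    rw [Finset.sum_comm]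
    conv_lhs => rw [← Finset.sum_range_reflect]
    rw [sum_Icc_one k (f := fun i =>
      ((-1:ℂ)^(k-i) * (2*(π:ℂ)/m)^(2*k-2*i)/(Nat.factorial (2*k-2*i))) *
        ∑ j ∈ Finset.Icc 1 n, (1:ℂ)/((a:ℂ)*(j:ℂ)+(b:ℂ))^(2*i))]
    refine Finset.sum_congr rfl fun i hi => ?_
    have hik : i < k := Finset.mem_range.mp hi
    rw [Finset.mul_sum]
    refine Finset.sum_congr rfl fun j hj => ?_
    rw [show k-(i+1) = k-1-i by omega, show 2*k-2*(i+1) = 2*(k-1-i) by omega,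
      show 2*(k-(k-1-i)) = 2*(i+1) by omega]
  have htelG := Finset.sum_range_sub (f := fun j : ℕ => (1/((a:ℂ)*((j:ℂ))+(b:ℂ))^(2*k)) * (Complex.cos (2*(π:ℂ)*((a:ℂ)*((j:ℂ))+(b:ℂ))/m) - ∑ i ∈ Finset.range k, (-1:ℂ)^i * (2*(π:ℂ)*((a:ℂ)*((j:ℂ))+(b:ℂ))/m)^(2*i)/(Nat.factorial (2*i)))) n
  rw [Finset.sum_sub_distrib] at htelG
  have hC : ((-1:ℂ)^k * (2*(π:ℂ)/m)^(2*k) / (2 * (Nat.factorial (2*k-1)))) *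
      (∑ j ∈ Finset.range n, ((∫ u in (0:ℝ)..1, (1-(u:ℂ))^(2*k-1) * Complex.cos (2*(π:ℂ)*((a:ℂ)*(((j+1:ℕ):ℂ))+(b:ℂ))*(u:ℝ)/m)) + (∫ u in (0:ℝ)..1, (1-(u:ℂ))^(2*k-1) * Complex.cos (2*(π:ℂ)*((a:ℂ)*(((j:ℕ):ℂ))+(b:ℂ))*(u:ℝ)/m))))
      = (1/2) * (∑ j ∈ Finset.range n, (1/((a:ℂ)*(((j+1:ℕ):ℂ))+(b:ℂ))^(2*k)) * (Complex.cos (2*(π:ℂ)*((a:ℂ)*(((j+1:ℕ):ℂ))+(b:ℂ))/m) - ∑ i ∈ Finset.range k, (-1:ℂ)^i * (2*(π:ℂ)*((a:ℂ)*(((j+1:ℕ):ℂ))+(b:ℂ))/m)^(2*i)/(Nat.factorial (2*i))))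
        + (1/2) * (∑ j ∈ Finset.range n, (1/((a:ℂ)*(((j:ℕ):ℂ))+(b:ℂ))^(2*k)) * (Complex.cos (2*(π:ℂ)*((a:ℂ)*(((j:ℕ):ℂ))+(b:ℂ))/m) - ∑ i ∈ Finset.range k, (-1:ℂ)^i * (2*(π:ℂ)*((a:ℂ)*(((j:ℕ):ℂ))+(b:ℂ))/m)^(2*i)/(Nat.factorial (2*i)))) := by
    rw [Finset.mul_sum, Finset.mul_sum, Finset.mul_sum, ← Finset.sum_add_distrib]
    refine Finset.sum_congr rfl fun j hj => ?_
    have hjn : j < n := Finset.mem_range.mp hj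
    rw [mul_add, key1 m hm k hk _ (hc (j+1) (by omega)) (hx (j+1) (by omega)),
      key1 m hm k hk _ (hc j (by omega)) (hx j (by omega))]
  have hG0 : (1/((a:ℂ)*(((0:ℕ):ℂ))+(b:ℂ))^(2*k)) * (Complex.cos (2*(π:ℂ)*((a:ℂ)*(((0:ℕ):ℂ))+(b:ℂ))/m) - ∑ i ∈ Finset.range k, (-1:ℂ)^i * (2*(π:ℂ)*((a:ℂ)*(((0:ℕ):ℂ))+(b:ℂ))/m)^(2*i)/(Nat.factorial (2*i)))
      = (1/((b:ℂ))^(2*k)) * (Complex.cos (2*(π:ℂ)*(b:ℂ)/m) - ∑ i ∈ Finset.range k, (-1:ℂ)^i * (2*(π:ℂ)*(b:ℂ)/m)^(2*i)/(Nat.factorial (2*i))) := by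
    norm_num
  have hQ0 := hG0.trans (keyP m hm k (b:ℂ) hbC)
  have hQn := keyP m hm k ((a:ℂ)*(n:ℂ)+(b:ℂ)) (hc n le_rfl)
  push_cast at hsum1 hIccG hswap hC htelG hQ0 hQn ⊢
  linear_combination hsum1 + hIccG + hswap - hC + (1/2)*htelG - (1/2)*hQ0 + (1/2)*hQn
end

section
/- Let a and b be nonzero integers, n a positive integer such that aj + b ≠ 0 for every integer j with 1 ≤ j ≤ n, m a nonzero complex number, and k a nonnegative integer. Writing HP_{r}(n) = ∑_{j=1}^{n} 1/(aj+b)^{r}, one has ∑_{j=1}^{n} (1/(aj+b)^{2k+1})·sin(2π(aj+b)/m) = -(1/(2b^{2k+1}))( sin(2πb/m) - ∑_{j=0}^{k} (-1)^{j}(2πb/m)^{2j+1}/(2j+1)! ) + (1/(2(an+b)^{2k+1}))( sin(2π(an+b)/m) - ∑_{j=0}^{k} (-1)^{j}(2π(an+b)/m)^{2j+1}/(2j+1)! ) + ∑_{j=1}^{k} ((-1)^{k-j}(2π/m)^{2k+1-2j}/(2k+1-2j)!)·HP_{2j}(n) + ((-1)^{k}(2π/m)^{2k+1}/(2(2k)!))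 ∫_{0}^{1} (1-u)^{2k}·( sin(2π(an+b)u/m) - sin(2πbu/m) )·cot(πau/m) du. -/
open Real Complex intervalIntegral

private lemma exp_int15 (w : ℂ) (hw : w ≠ 0) : ∀ r : ℕ,
    ∫ u in (0:ℝ)..1, (1 - (u:ℂ))^r * Complex.exp (w * u) =
    r.factorial / w^(r+1) * (Complex.exp w - ∑ s ∈ Finset.range (r+1), w^s / s.factorial) := by
  intro r
  induction r with
  | zero =>
    simp [integral_exp_mul_complex hw]
    field_simp
  | succ r ih =>
    have hu : ∀ x ∈ Set.uIcc (0:ℝ) 1, HasDerivAt (fun x : ℝ => (1 - (x:ℂ))^(r+1))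
        (-((r+1) * (1 - (x:ℂ))^r)) x := by
      intro x _
      have h1 : HasDerivAt (fun z : ℂ => (1 - z)^(r+1)) (-((r+1) * (1 - (x:ℂ))^r)) (x:ℂ) := by
        have h0 : HasDerivAt (fun z : ℂ => (1 - z)) (-1) (x:ℂ) :=
          ((hasDerivAt_id _).const_sub 1)
        have := h0.fun_pow (r+1)
        simpa [mul_comm, mul_assoc, mul_left_comm] using this
      exact h1.comp_ofReal
    have hv : ∀ x ∈ Set.uIcc (0:ℝ) 1, HasDerivAt (fun x : ℝ => Complex.exp (w * x) / w)
        (Complex.exp (w * x)) x := by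
      intro x _
      have h1 : HasDerivAt (fun z : ℂ => Complex.exp (w * z) / w) (Complex.exp (w * x)) (x:ℂ) := by
        have h0 : HasDerivAt (fun z : ℂ => w * z) w (x:ℂ) := by
          simpa using (hasDerivAt_id (x:ℂ)).const_mul w
        have := (h0.cexp).div_const w
        simpa [mul_comm, mul_div_assoc, mul_div_cancel_left₀ _ hw] using this
      exact h1.comp_ofReal
    have hparts := integral_mul_deriv_eq_deriv_mul hu hv
      ((Continuous.intervalIntegrable (by continuity) 0 1))
      ((Continuous.intervalIntegrable (by continuity) 0 1))
    have h2 : ∫ x in (0:ℝ)..1, (-((r+1) * (1 - (x:ℂ))^r)) * (Complex.exp (w * x) / w)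
        = (-((r+1):ℂ)/w) * ∫ x in (0:ℝ)..1, (1 - (x:ℂ))^r * Complex.exp (w * x) := by
      rw [← integral_const_mul]
      apply integral_congr
      intro x _
      field_simp
    rw [hparts, h2, ih, Finset.sum_range_succ (fun s => w^s/(s.factorial:ℂ)) (r+1)]
    have hfac : ((r+1).factorial : ℂ) = (r+1) * r.factorial := by
      push_cast [Nat.factorial_succ]; ring
    have hfacne : (r.factorial : ℂ) ≠ 0 := by exact_mod_cast r.factorial_ne_zero
    have hfacne1 : ((r+1).factorial : ℂ) ≠ 0 := by exact_mod_cast (r+1).factorial_ne_zero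
    generalize (∑ s ∈ Finset.range (r+1), w^s / (s.factorial:ℂ)) = S
    field_simp
    rw [hfac]
    simp only [Complex.ofReal_one, Complex.ofReal_zero, mul_zero, Complex.exp_zero]
    ring

private lemma oddsum15 (c : ℂ) : ∀ k : ℕ,
    ∑ s ∈ Finset.range (2*k+1), ((I*c)^s - (-(I*c))^s)/(s.factorial : ℂ)
      = 2*I*∑ j ∈ Finset.range k, (-1:ℂ)^j * c^(2*j+1)/((2*j+1).factorial : ℂ) := by
  intro k
  induction k with
  | zero => simp
  | succ k ih =>
    have h1 : 2*(k+1)+1 = (2*k+1)+1+1 := by ring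
    rw [h1, Finset.sum_range_succ, Finset.sum_range_succ, ih, Finset.sum_range_succ]
    have he : (-(I*c))^((2*k+1)+1) = (I*c)^((2*k+1)+1) := by
      rw [neg_pow]; simp [pow_succ, pow_mul]
    have ho : (-(I*c))^(2*k+1) = -((I*c)^(2*k+1)) := by
      rw [neg_pow]; simp [pow_succ, pow_mul]
    have hI : (I*c)^(2*k+1) = (-1:ℂ)^k * I * c^(2*k+1) := by
      rw [mul_pow, pow_succ, pow_mul, Complex.I_sq]
    rw [he, ho, hI]
    ring

private lemma cos_int15 (c : ℂ) (hc : c ≠ 0) (k : ℕ) :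
    ∫ u in (0:ℝ)..1, (1 - (u:ℂ))^(2*k) * Complex.cos (c * u)
      = (-1:ℂ)^k * (2*k).factorial / c^(2*k+1) *
        (Complex.sin c - ∑ j ∈ Finset.range k, (-1:ℂ)^j * c^(2*j+1)/((2*j+1).factorial : ℂ)) := by
  have hIc : I * c ≠ 0 := by simp [hc, Complex.I_ne_zero]
  have hsplit : ∫ u in (0:ℝ)..1, (1 - (u:ℂ))^(2*k) * Complex.cos (c * u)
      = (1/2) * ((∫ u in (0:ℝ)..1, (1 - (u:ℂ))^(2*k) * Complex.exp ((I*c) * u))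
        + ∫ u in (0:ℝ)..1, (1 - (u:ℂ))^(2*k) * Complex.exp ((-(I*c)) * u)) := by
    rw [← intervalIntegral.integral_add
      ((Continuous.intervalIntegrable (by continuity) 0 1))
      ((Continuous.intervalIntegrable (by continuity) 0 1)),
      ← intervalIntegral.integral_const_mul]
    apply integral_congr
    intro x _
    have h2c := Complex.two_cos (c * x)
    have : Complex.cos (c * x) = (Complex.exp ((I*c) * x) + Complex.exp ((-(I*c)) * x))/2 := by
      rw [eq_div_iff (two_ne_zero)]
      rw [show (I*c) * (x:ℂ) = (c * x) * I by ring, show (-(I*c)) * (x:ℂ) = -(c * x) * I by ring]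
      linear_combination h2c
    simp only []
    rw [this]; ring
  rw [hsplit, exp_int15 (I*c) hIc (2*k), exp_int15 (-(I*c)) (neg_ne_zero.mpr hIc) (2*k)]
  have hIpow : (I*c)^(2*k+1) = (-1:ℂ)^k * I * c^(2*k+1) := by
    rw [mul_pow, pow_succ, pow_mul, Complex.I_sq]
  have hnIpow : (-(I*c))^(2*k+1) = -((-1:ℂ)^k * I * c^(2*k+1)) := by
    rw [neg_pow]; simp [pow_succ, pow_mul, hIpow]
  have hsub := oddsum15 c k
  simp only [sub_div, Finset.sum_sub_distrib] at hsub
  have hA := eq_add_of_sub_eq hsub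
  have hE : Complex.exp (I*c) = Complex.exp (-(I*c)) + 2*I*Complex.sin c := by
    have h2s := Complex.two_sin c
    rw [show -(I*c) = -c * I by ring, show I*c = c * I by ring]
    linear_combination -I * h2s - (Complex.exp (-c*I) - Complex.exp (c*I)) * Complex.I_sq
  rw [hA, hE]
  have hck : (c:ℂ)^(2*k+1) ≠ 0 := pow_ne_zero _ hc
  rw [hIpow, hnIpow]
  generalize (∑ s ∈ Finset.range (2*k+1), (-(I*c))^s / (s.factorial:ℂ)) = B
  generalize Complex.exp (-(I*c)) = E
  generalize (∑ j ∈ Finset.range k, (-1:ℂ)^j * c^(2*j+1)/((2*j+1).factorial : ℂ)) = T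
  rcases Nat.even_or_odd k with hpar | hpar
  · rw [hpar.neg_one_pow]
    field_simp
    ring
  · rw [hpar.neg_one_pow]
    field_simp
    ring

private lemma key_step15 (y h : ℂ) :
    (Complex.sin (y + 2*h) - Complex.sin y) * Complex.cos h
      = Complex.sin h * (Complex.cos (y + 2*h) + Complex.cos y) := by
  simp only [Complex.sin_add, Complex.cos_add, Complex.sin_two_mul, Complex.cos_two_mul]
  linear_combination (2*Complex.cos h*Complex.sin y) * (Complex.sin_sq_add_cos_sq h)

private lemma teles15 (x h : ℂ) : ∀ n : ℕ,
    (Complex.sin (x + 2*n*h) - Complex.sin x) * Complex.cos h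
      = Complex.sin h * (2 * ∑ j ∈ Finset.Icc 1 n, Complex.cos (x + 2*j*h)
          - (Complex.cos (x + 2*n*h) - Complex.cos x)) := by
  intro n
  induction n with
  | zero => simp
  | succ n ih =>
    rw [Finset.sum_Icc_succ_top (by omega : 1 ≤ n+1)]
    push_cast
    have hy : x + 2*((n:ℂ)+1)*h = (x + 2*(n:ℂ)*h) + 2*h := by ring
    rw [hy]
    linear_combination ih + key_step15 (x + 2*(n:ℂ)*h) h

private lemma sum_Icc_reflect15 (k : ℕ) (F : ℕ → ℂ) :
    ∑ i ∈ Finset.Icc 1 k, F i = ∑ j ∈ Finset.range k, F (k - j) := by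
  apply Finset.sum_bij' (i := fun (a : ℕ) (_ : a ∈ Finset.Icc 1 k) => k - a)
    (j := fun (a : ℕ) (_ : a ∈ Finset.range k) => k - a)
  · intro a ha
    simp only [Finset.mem_Icc] at ha
    simp only [Finset.mem_range]; omega
  · intro a ha
    simp only [Finset.mem_range] at ha
    simp only [Finset.mem_Icc]; omega
  · intro a ha
    simp only [Finset.mem_Icc] at ha; omega
  · intro a ha
    simp only [Finset.mem_range] at ha; omega
  · intro a ha
    simp only [Finset.mem_Icc] at ha
    congr 1; omega

private lemma hTd15 (d p : ℂ) (hd : d ≠ 0) (k : ℕ) :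
    (∑ j ∈ Finset.range k, (-1:ℂ)^j * (p*d)^(2*j+1)/((2*j+1).factorial : ℂ)) / d^(2*k+1)
      = ∑ i ∈ Finset.Icc 1 k,
          ((-1:ℂ)^(k-i) * p^(2*k+1-2*i) / (((2*k+1-2*i).factorial : ℕ) : ℂ)) * (1/d^(2*i)) := by
  rw [sum_Icc_reflect15 k (fun i => ((-1:ℂ)^(k-i) * p^(2*k+1-2*i) / (((2*k+1-2*i).factorial : ℕ) : ℂ)) * (1/d^(2*i))),
    Finset.sum_div]
  apply Finset.sum_congr rfl
  intro j hj
  have hjk : j < k := Finset.mem_range.mp hj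
  have h1 : k - (k - j) = j := by omega
  have h2 : 2*k+1-2*(k-j) = 2*j+1 := by omega
  simp only [h1, h2]
  have hdd : d^(2*k+1) = d^(2*j+1) * d^(2*(k-j)) := by rw [← pow_add]; congr 1; omega
  have hfne : (((2*j+1).factorial : ℕ) : ℂ) ≠ 0 := by exact_mod_cast (2*j+1).factorial_ne_zero
  rw [hdd, mul_pow]
  field_simp

private lemma perj15 (c d p : ℂ) (hd : d ≠ 0) (hp : p ≠ 0) (hc : c = p * d) (k : ℕ) :
    1/d^(2*k+1) * Complex.sin c
      = (-1:ℂ)^k * p^(2*k+1)/(((2*k).factorial : ℕ) : ℂ) *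
          (∫ u in (0:ℝ)..1, (1-(u:ℂ))^(2*k) * Complex.cos (c*u))
        + ∑ i ∈ Finset.Icc 1 k,
            ((-1:ℂ)^(k-i) * p^(2*k+1-2*i) / (((2*k+1-2*i).factorial : ℕ) : ℂ)) * (1/d^(2*i)) := by
  subst hc
  rw [cos_int15 (p*d) (mul_ne_zero hp hd) k, ← hTd15 d p hd k]
  have hfne : (((2*k).factorial : ℕ) : ℂ) ≠ 0 := by exact_mod_cast (2*k).factorial_ne_zero
  have hdk : d^(2*k+1) ≠ 0 := pow_ne_zero _ hd
  have hpk : p^(2*k+1) ≠ 0 := pow_ne_zero _ hp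
  rw [mul_pow]
  rcases Nat.even_or_odd k with hpar | hpar
  · rw [hpar.neg_one_pow]; field_simp; ring
  · rw [hpar.neg_one_pow]; field_simp; ring

private lemma boundary15 (c d p : ℂ) (hd : d ≠ 0) (hp : p ≠ 0) (hc : c = p * d) (k : ℕ) :
    (1/(2*d^(2*k+1))) * (Complex.sin c
        - ∑ j ∈ Finset.range (k+1), (-1:ℂ)^j * c^(2*j+1)/(((2*j+1).factorial : ℕ) : ℂ))
      = (-1:ℂ)^k * p^(2*k+1)/(2*(((2*k).factorial : ℕ) : ℂ)) *
          (∫ u in (0:ℝ)..1, (1-(u:ℂ))^(2*k) * Complex.cos (c*u))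
        - (-1:ℂ)^k * p^(2*k+1)/(2*(((2*k+1).factorial : ℕ) : ℂ)) := by
  subst hc
  rw [cos_int15 (p*d) (mul_ne_zero hp hd) k, Finset.sum_range_succ]
  have hfne : (((2*k).factorial : ℕ) : ℂ) ≠ 0 := by exact_mod_cast (2*k).factorial_ne_zero
  have hfne1 : (((2*k+1).factorial : ℕ) : ℂ) ≠ 0 := by exact_mod_cast (2*k+1).factorial_ne_zero
  have hdk : d^(2*k+1) ≠ 0 := pow_ne_zero _ hd
  have hpk : p^(2*k+1) ≠ 0 := pow_ne_zero _ hp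
  generalize (∑ j ∈ Finset.range k, (-1:ℂ)^j * (p*d)^(2*j+1)/(((2*j+1).factorial : ℕ) : ℂ)) = T
  rw [mul_pow]
  rcases Nat.even_or_odd k with hpar | hpar
  · rw [hpar.neg_one_pow]; field_simp; ring
  · rw [hpar.neg_one_pow]; field_simp; ring

theorem stmt_15 (a b : ℤ) (ha : a ≠ 0) (hb : b ≠ 0) (n : ℕ) (hn : 0 < n)
    (h : ∀ j : ℤ, 1 ≤ j → j ≤ n → a * j + b ≠ 0) (m : ℂ) (hm : m ≠ 0) (k : ℕ) :
    ∑ j ∈ Finset.Icc 1 n,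
        (1 : ℂ) / (a * j + b) ^ (2 * k + 1) *
          Complex.sin (2 * π * ((a : ℂ) * j + b) / m) =
      -(1 / (2 * (b : ℂ) ^ (2 * k + 1))) *
          (Complex.sin (2 * π * (b : ℂ) / m) -
            ∑ j ∈ Finset.range (k + 1),
              (-1 : ℂ) ^ j * (2 * π * (b : ℂ) / m) ^ (2 * j + 1) /
                (Nat.factorial (2 * j + 1)))
      + (1 / (2 * ((a : ℂ) * n + b) ^ (2 * k + 1))) *
          (Complex.sin (2 * π * ((a : ℂ) * n + b) / m) -
            ∑ j ∈ Finset.range (k + 1),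
              (-1 : ℂ) ^ j * (2 * π * ((a : ℂ) * n + b) / m) ^ (2 * j + 1) /
                (Nat.factorial (2 * j + 1)))
      + (∑ j ∈ Finset.Icc 1 k,
          ((-1 : ℂ) ^ (k - j) * (2 * π / m) ^ (2 * k + 1 - 2 * j) /
              (Nat.factorial (2 * k + 1 - 2 * j))) *
            ∑ i ∈ Finset.Icc 1 n, (1 : ℂ) / (a * i + b) ^ (2 * j))
      + ((-1 : ℂ) ^ k * (2 * π / m) ^ (2 * k + 1) / (2 * (Nat.factorial (2 * k)))) *
          ∫ u in (0:ℝ)..1,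
            (1 - (u : ℂ)) ^ (2 * k) *
              (Complex.sin (2 * π * ((a : ℂ) * n + b) * u / m)
                - Complex.sin (2 * π * (b : ℂ) * u / m)) *
              Complex.cot (π * (a : ℂ) * u / m) := by
  have hpiC : ((π : ℝ) : ℂ) ≠ 0 := Complex.ofReal_ne_zero.mpr Real.pi_ne_zero
  have hp : (2 * (π:ℂ)/m) ≠ 0 := div_ne_zero (mul_ne_zero two_ne_zero hpiC) hm
  have hbC : (b:ℂ) ≠ 0 := Int.cast_ne_zero.mpr hb
  have hdj : ∀ j : ℕ, j ∈ Finset.Icc 1 n → ((a:ℂ) * (j:ℂ) + (b:ℂ)) ≠ 0 := by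
    intro j hj
    rw [Finset.mem_Icc] at hj
    have h1 : (a * (j:ℤ) + b) ≠ 0 := h j (by exact_mod_cast hj.1) (by exact_mod_cast hj.2)
    have h2 : ((a * (j:ℤ) + b : ℤ) : ℂ) ≠ 0 := Int.cast_ne_zero.mpr h1
    push_cast at h2
    exact h2
  have hdn : ((a:ℂ) * (n:ℂ) + (b:ℂ)) ≠ 0 := hdj n (Finset.mem_Icc.mpr ⟨hn, le_refl n⟩)
  -- Step A/B : rewrite the integral
  have hfg : ∀ u : ℝ, Complex.sin (π * (a:ℂ) * u / m) ≠ 0 →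
      (1 - (u : ℂ)) ^ (2 * k) *
        (Complex.sin (2 * π * ((a : ℂ) * n + b) * u / m)
          - Complex.sin (2 * π * (b : ℂ) * u / m)) *
        Complex.cot (π * (a : ℂ) * u / m)
      = 2 * ∑ j ∈ Finset.Icc 1 n, (1 - (u:ℂ))^(2*k) * Complex.cos ((2 * π * ((a:ℂ) * j + b) / m) * u)
        - ((1 - (u:ℂ))^(2*k) * Complex.cos ((2 * π * ((a:ℂ) * n + b) / m) * u)
          - (1 - (u:ℂ))^(2*k) * Complex.cos ((2 * π * (b:ℂ) / m) * u)) := by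
    intro u hsin
    set x : ℂ := 2 * π * (b:ℂ) * u / m with hx
    set hh : ℂ := π * (a:ℂ) * u / m with hhh
    have ht := teles15 x hh n
    have ht2 : (Complex.sin (x + 2*n*hh) - Complex.sin x) * Complex.cot hh
        = 2 * ∑ j ∈ Finset.Icc 1 n, Complex.cos (x + 2*j*hh)
          - (Complex.cos (x + 2*n*hh) - Complex.cos x) := by
      rw [Complex.cot_eq_cos_div_sin, ← mul_div_assoc, ht, mul_div_cancel_left₀ _ hsin]
    have e1 : 2 * (π:ℂ) * ((a : ℂ) * n + b) * u / m = x + 2*(n:ℂ)*hh := by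
      rw [hx, hhh]; ring
    have e2 : (2 * (π:ℂ) * ((a:ℂ) * n + b) / m) * u = x + 2*(n:ℂ)*hh := by
      rw [hx, hhh]; ring
    have e3 : (2 * (π:ℂ) * (b:ℂ) / m) * u = x := by rw [hx]; ring
    rw [e1, e2, e3]
    rw [Finset.sum_congr rfl (fun j _ => by
      rw [show (2 * (π:ℂ) * ((a:ℂ) * j + b) / m) * u = x + 2*(j:ℂ)*hh from by rw [hx, hhh]; ring]),
      ← Finset.mul_sum]
    linear_combination (1 - (u:ℂ))^(2*k) * ht2
  have hpa : (π : ℂ) * a / m ≠ 0 := by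
    apply div_ne_zero _ hm
    exact mul_ne_zero hpiC (by exact_mod_cast ha)
  have hcongr : (∫ u in (0:ℝ)..1,
        (1 - (u : ℂ)) ^ (2 * k) *
          (Complex.sin (2 * π * ((a : ℂ) * n + b) * u / m)
            - Complex.sin (2 * π * (b : ℂ) * u / m)) *
          Complex.cot (π * (a : ℂ) * u / m))
      = ∫ u in (0:ℝ)..1,
        (2 * ∑ j ∈ Finset.Icc 1 n, (1 - (u:ℂ))^(2*k) * Complex.cos ((2 * π * ((a:ℂ) * j + b) / m) * u)
          - ((1 - (u:ℂ))^(2*k) * Complex.cos ((2 * π * ((a:ℂ) * n + b) / m) * u)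
            - (1 - (u:ℂ))^(2*k) * Complex.cos ((2 * π * (b:ℂ) / m) * u))) := by
    set Z : Set ℝ := {u : ℝ | Complex.sin (π * a * u / m) = 0} with hZdef
    have hZc : Z.Countable := by
      have hsub : Z ⊆ ⋃ ℓ : ℤ, {u : ℝ | ((π : ℂ) * a / m) * u = ℓ * π} := by
        intro u hu
        rw [hZdef, Set.mem_setOf_eq, Complex.sin_eq_zero_iff] at hu
        obtain ⟨ℓ, hℓ⟩ := hu
        refine Set.mem_iUnion.mpr ⟨ℓ, ?_⟩
        rw [Set.mem_setOf_eq, ← hℓ]; ring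
      refine Set.Countable.mono hsub (Set.countable_iUnion fun ℓ => ?_)
      apply Set.Subsingleton.countable
      intro u hu v hv
      simp only [Set.mem_setOf_eq] at hu hv
      have h3 : ((π : ℂ) * a / m) * u = ((π : ℂ) * a / m) * v := by rw [hu, hv]
      have h4 := mul_left_cancel₀ hpa h3
      exact_mod_cast h4
    apply intervalIntegral.integral_congr_ae
    have hZ0 : MeasureTheory.volume Z = 0 := hZc.measure_zero _
    have hae : ∀ᵐ u : ℝ, u ∉ Z := MeasureTheory.measure_eq_zero_iff_ae_notMem.mp hZ0
    filter_upwards [hae] with u hu _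
    exact hfg u hu
  have hcont : ∀ w : ℂ, Continuous (fun u : ℝ => (1 - (u:ℂ))^(2*k) * Complex.cos (w * u)) := by
    intro w; fun_prop
  have hval : (∫ u in (0:ℝ)..1,
        (2 * ∑ j ∈ Finset.Icc 1 n, (1 - (u:ℂ))^(2*k) * Complex.cos ((2 * π * ((a:ℂ) * j + b) / m) * u)
          - ((1 - (u:ℂ))^(2*k) * Complex.cos ((2 * π * ((a:ℂ) * n + b) / m) * u)
            - (1 - (u:ℂ))^(2*k) * Complex.cos ((2 * π * (b:ℂ) / m) * u))))
      = 2 * ∑ j ∈ Finset.Icc 1 n, (∫ u in (0:ℝ)..1, (1 - (u:ℂ))^(2*k) * Complex.cos ((2 * π * ((a:ℂ) * j + b) / m) * u))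
        - ((∫ u in (0:ℝ)..1, (1 - (u:ℂ))^(2*k) * Complex.cos ((2 * π * ((a:ℂ) * n + b) / m) * u))
          - ∫ u in (0:ℝ)..1, (1 - (u:ℂ))^(2*k) * Complex.cos ((2 * π * (b:ℂ) / m) * u)) := by
    rw [integral_sub, integral_sub, integral_const_mul, integral_finset_sum]
    · intro j _; exact (hcont _).intervalIntegrable 0 1
    · exact ((hcont _).intervalIntegrable 0 1)
    · exact ((hcont _).intervalIntegrable 0 1)
    · apply Continuous.intervalIntegrable
      exact continuous_const.mul (continuous_finset_sum _ (fun j _ => hcont _))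
    · exact (((hcont _).sub (hcont _)).intervalIntegrable 0 1)
  rw [hcongr, hval]
  -- LHS expansion
  have hLHS : ∀ j ∈ Finset.Icc 1 n,
      (1 : ℂ) / ((a:ℂ) * j + b) ^ (2 * k + 1) * Complex.sin (2 * π * ((a : ℂ) * j + b) / m)
      = (-1:ℂ)^k * (2*π/m)^(2*k+1)/(((2*k).factorial : ℕ) : ℂ) *
          (∫ u in (0:ℝ)..1, (1-(u:ℂ))^(2*k) * Complex.cos ((2 * π * ((a:ℂ) * j + b) / m)*u))
        + ∑ i ∈ Finset.Icc 1 k,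
            ((-1:ℂ)^(k-i) * (2*π/m)^(2*k+1-2*i) / (((2*k+1-2*i).factorial : ℕ) : ℂ)) * (1/((a:ℂ) * j + b)^(2*i)) := by
    intro j hj
    exact perj15 (2 * π * ((a:ℂ) * j + b) / m) ((a:ℂ) * j + b) (2*π/m) (hdj j hj) hp (by ring) k
  rw [Finset.sum_congr rfl hLHS, Finset.sum_add_distrib, ← Finset.mul_sum]
  -- swap double sum
  rw [Finset.sum_comm]
  have hswap : ∀ i ∈ Finset.Icc 1 k,
      ∑ j ∈ Finset.Icc 1 n, ((-1:ℂ)^(k-i) * (2*π/m)^(2*k+1-2*i) / (((2*k+1-2*i).factorial : ℕ) : ℂ)) * (1/((a:ℂ) * j + b)^(2*i))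
      = ((-1:ℂ)^(k-i) * (2*π/m)^(2*k+1-2*i) / (((2*k+1-2*i).factorial : ℕ) : ℂ)) * ∑ j ∈ Finset.Icc 1 n, (1:ℂ)/((a:ℂ) * j + b)^(2*i) := by
    intro i _
    rw [Finset.mul_sum]
  rw [Finset.sum_congr rfl hswap]
  -- boundary pieces
  rw [show -(1 / (2 * (b : ℂ) ^ (2 * k + 1))) *
          (Complex.sin (2 * π * (b : ℂ) / m) -
            ∑ j ∈ Finset.range (k + 1),
              (-1 : ℂ) ^ j * (2 * π * (b : ℂ) / m) ^ (2 * j + 1) /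
                (Nat.factorial (2 * j + 1)))
      = -((1 / (2 * (b : ℂ) ^ (2 * k + 1))) *
          (Complex.sin (2 * π * (b : ℂ) / m) -
            ∑ j ∈ Finset.range (k + 1),
              (-1 : ℂ) ^ j * (2 * π * (b : ℂ) / m) ^ (2 * j + 1) /
                (Nat.factorial (2 * j + 1)))) from by ring]
  rw [boundary15 (2 * π * (b:ℂ) / m) (b:ℂ) (2*π/m) hbC hp (by ring) k,
    boundary15 (2 * π * ((a:ℂ) * n + b) / m) ((a:ℂ) * n + b) (2*π/m) hdn hp (by ring) k]
  ring
end

section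
/- Let a and b be nonzero integers, n a positive integer such that aj + b ≠ 0 for every integer j with 1 ≤ j ≤ n, m a nonzero complex number, and k a nonnegative integer. Writing HP_{r}(n) = ∑_{j=1}^{n} 1/(aj+b)^{r}, one has ∑_{j=1}^{n} (1/(aj+b)^{2k+1})·cos(2π(aj+b)/m) = -(1/(2b^{2k+1}))( cos(2πb/m) - ∑_{j=0}^{k} (-1)^{j}(2πb/m)^{2j}/(2j)! ) + (1/(2(an+b)^{2k+1}))( cos(2π(an+b)/m) - ∑_{j=0}^{k} (-1)^{j}(2π(an+b)/m)^{2j}/(2j)! ) + ∑_{j=0}^{k} ((-1)^{k-j}(2π/m)^{2k-2j}/(2k-2j)!)·HP_{2j+1}(n) + ((-1)^{k}(2π/m)^{2k+1}/(2(2k)!)) ∫_{0}^{1} (1-u)^{2k}·( cos(2π(an+b)u/m) - cos(2πbu/m) )·cot(πau/m) du. -/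
open Real Complex

lemma baseI (c : ℂ) : c * ∫ u in (0:ℝ)..1, Complex.sin (c*u) = 1 - Complex.cos c := by
  have hd : ∀ u : ℝ, HasDerivAt (fun v : ℝ => -Complex.cos (c*v)) (c * Complex.sin (c*u)) u := by
    intro u
    have : HasDerivAt (fun z : ℂ => -Complex.cos (c*z)) (c * Complex.sin (c*u)) (u:ℂ) := by
      have h1 : HasDerivAt (fun z : ℂ => c*z) c (u:ℂ) := by
        simpa using (hasDerivAt_id (u:ℂ)).const_mul c
      have h2 := (Complex.hasDerivAt_cos (c*(u:ℂ))).comp (u:ℂ) h1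
      simpa [mul_comm, Function.comp_def, Pi.neg_def] using h2.neg
    exact this.comp_ofReal
  have := intervalIntegral.integral_eq_sub_of_hasDerivAt (fun u _ => hd u)
    (Continuous.intervalIntegrable (by fun_prop) 0 1)
  rw [intervalIntegral.integral_const_mul] at this
  simp at this
  rw [this]; ring

lemma partsI (c : ℂ) (r : ℕ) :
    c * ∫ u in (0:ℝ)..1, (1-(u:ℂ))^(r+1) * Complex.sin (c*u)
      = 1 - (r+1) * ∫ u in (0:ℝ)..1, (1-(u:ℂ))^r * Complex.cos (c*u) := by
  have hd : ∀ u : ℝ, HasDerivAt (fun v : ℝ => -((1-(v:ℂ))^(r+1) * Complex.cos (c*v)))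
      ((r+1)*((1-(u:ℂ))^r * Complex.cos (c*u)) + c * ((1-(u:ℂ))^(r+1) * Complex.sin (c*u))) u := by
    intro u
    have h1 : HasDerivAt (fun z : ℂ => (1-z)^(r+1)) (-((r+1)*(1-(u:ℂ))^r)) (u:ℂ) := by
      have hbase : HasDerivAt (fun z : ℂ => 1-z) (-1) (u:ℂ) := by
        simpa using (hasDerivAt_id (u:ℂ)).const_sub 1
      have := (hasDerivAt_pow (r+1) (1-(u:ℂ))).comp (u:ℂ) hbase
      simpa [mul_comm, mul_assoc, Function.comp_def] using this
    have h2 : HasDerivAt (fun z : ℂ => Complex.cos (c*z)) (-(c * Complex.sin (c*u))) (u:ℂ) := by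
      have hc : HasDerivAt (fun z : ℂ => c*z) c (u:ℂ) := by
        simpa using (hasDerivAt_id (u:ℂ)).const_mul c
      have := (Complex.hasDerivAt_cos (c*(u:ℂ))).comp (u:ℂ) hc
      simpa [mul_comm, Function.comp_def] using this
    have h3 := (h1.mul h2).neg
    have h4 := h3.comp_ofReal
    exact h4.congr_deriv (by ring)
  have key := intervalIntegral.integral_eq_sub_of_hasDerivAt (fun u _ => hd u)
    (Continuous.intervalIntegrable (by fun_prop) 0 1)
  rw [intervalIntegral.integral_add
      ((Continuous.intervalIntegrable (by fun_prop) 0 1))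
      ((Continuous.intervalIntegrable (by fun_prop) 0 1)),
    intervalIntegral.integral_const_mul, intervalIntegral.integral_const_mul] at key
  simp at key
  linear_combination key

lemma partsJ (c : ℂ) (r : ℕ) :
    c * ∫ u in (0:ℝ)..1, (1-(u:ℂ))^(r+1) * Complex.cos (c*u)
      = (r+1) * ∫ u in (0:ℝ)..1, (1-(u:ℂ))^r * Complex.sin (c*u) := by
  have hd : ∀ u : ℝ, HasDerivAt (fun v : ℝ => (1-(v:ℂ))^(r+1) * Complex.sin (c*v))
      (-((r+1)*((1-(u:ℂ))^r * Complex.sin (c*u))) + c * ((1-(u:ℂ))^(r+1) * Complex.cos (c*u))) u := by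
    intro u
    have h1 : HasDerivAt (fun z : ℂ => (1-z)^(r+1)) (-((r+1)*(1-(u:ℂ))^r)) (u:ℂ) := by
      have hbase : HasDerivAt (fun z : ℂ => 1-z) (-1) (u:ℂ) := by
        simpa using (hasDerivAt_id (u:ℂ)).const_sub 1
      have := (hasDerivAt_pow (r+1) (1-(u:ℂ))).comp (u:ℂ) hbase
      simpa [mul_comm, mul_assoc, Function.comp_def] using this
    have h2 : HasDerivAt (fun z : ℂ => Complex.sin (c*z)) (c * Complex.cos (c*u)) (u:ℂ) := by
      have hc : HasDerivAt (fun z : ℂ => c*z) c (u:ℂ) := by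
        simpa using (hasDerivAt_id (u:ℂ)).const_mul c
      have := (Complex.hasDerivAt_sin (c*(u:ℂ))).comp (u:ℂ) hc
      simpa [mul_comm, Function.comp_def] using this
    have h4 := (h1.mul h2).comp_ofReal
    exact h4.congr_deriv (by ring)
  have key := intervalIntegral.integral_eq_sub_of_hasDerivAt (fun u _ => hd u)
    (Continuous.intervalIntegrable (by fun_prop) 0 1)
  rw [intervalIntegral.integral_add
      ((Continuous.intervalIntegrable (by fun_prop) 0 1))
      ((Continuous.intervalIntegrable (by fun_prop) 0 1)),
    intervalIntegral.integral_neg, intervalIntegral.integral_const_mul,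
    intervalIntegral.integral_const_mul] at key
  simp at key
  linear_combination key

lemma taylorA (c : ℂ) (k : ℕ) :
    c^(2*k+1) * ∫ u in (0:ℝ)..1, (1-(u:ℂ))^(2*k) * Complex.sin (c*u)
      = (-1)^(k+1) * ((2*k).factorial : ℂ) *
        (Complex.cos c - ∑ i ∈ Finset.range (k+1),
          (-1)^i * c^(2*i) / ((2*i).factorial : ℂ)) := by
  induction k with
  | zero =>
    norm_num [Finset.sum_range_one]
    linear_combination baseI c
  | succ k ih =>
    have h1 := partsI c (2*k+1)
    have h2 := partsJ c (2*k)
    have e1 : 2*(k+1) = 2*k+1+1 := by ring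
    rw [e1, Finset.sum_range_succ, e1]
    have hfac : ((2*k+1+1).factorial : ℂ) = (2*(k:ℂ)+2)*(2*(k:ℂ)+1)*((2*k).factorial : ℂ) := by
      rw [Nat.factorial_succ, Nat.factorial_succ]; push_cast; ring
    rw [hfac]
    have hne : (2*(k:ℂ)+2)*(2*(k:ℂ)+1)*((2*k).factorial : ℂ) ≠ 0 := by
      have hf : ((2*k).factorial : ℂ) ≠ 0 := Nat.cast_ne_zero.2 (Nat.factorial_ne_zero _)
      have h2k : ((2*k+2 : ℕ) : ℂ) ≠ 0 := Nat.cast_ne_zero.2 (by omega)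
      have h2k1 : ((2*k+1 : ℕ) : ℂ) ≠ 0 := Nat.cast_ne_zero.2 (by omega)
      push_cast at h2k h2k1
      exact mul_ne_zero (mul_ne_zero h2k h2k1) hf
    have hdiv : c^(2*k+1+1) / ((2*(k:ℂ)+2)*(2*(k:ℂ)+1)*((2*k).factorial : ℂ))
        * ((2*(k:ℂ)+2)*(2*(k:ℂ)+1)*((2*k).factorial : ℂ)) = c^(2*k+1+1) :=
      div_mul_cancel₀ _ hne
    have hm1 : ((-1:ℂ))^(2*k) = 1 := by
      rw [pow_mul]; norm_num
    push_cast at h1 h2 ⊢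
    linear_combination c^(2*k+2)*h1 - (2*(k:ℂ)+2)*c^(2*k+1)*h2
      - ((2*(k:ℂ)+2)*(2*(k:ℂ)+1))*ih + ((-1:ℂ)^(k+1+1) * (-1:ℂ)^(k+1)) * hdiv
      - c^(2*k+2) * hm1

lemma telesc (α β : ℂ) (n : ℕ) :
    2 * Complex.sin α * ∑ j ∈ Finset.Icc 1 n, Complex.sin (2*α*j + β)
      = Complex.cos (β + α) - Complex.cos (2*α*n + β + α) := by
  induction n with
  | zero => simp
  | succ n ih =>
    rw [Finset.sum_Icc_succ_top (by omega : 1 ≤ n+1), mul_add, ih]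
    have key : Complex.cos (2*α*n + β + α) - Complex.cos (2*α*(n+1) + β + α)
        = 2 * Complex.sin α * Complex.sin (2*α*(n+1) + β) := by
      rw [Complex.cos_sub_cos]
      have e1 : (2*α*n + β + α + (2*α*(n+1) + β + α))/2 = 2*α*(n+1) + β := by
        ring
      have e2 : (2*α*n + β + α - (2*α*(n+1) + β + α))/2 = -α := by
        ring
      rw [e1, e2, Complex.sin_neg]; ring
    push_cast at key ⊢
    linear_combination -key

lemma pointwise (α β : ℂ) (n : ℕ) (hα : Complex.sin α ≠ 0) :
    (Complex.cos (2*α*n + β) - Complex.cos β) * (Complex.cos α / Complex.sin α)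
      = Complex.sin (2*α*n + β) - Complex.sin β
        - 2 * ∑ j ∈ Finset.Icc 1 n, Complex.sin (2*α*j + β) := by
  rw [mul_div_assoc', div_eq_iff hα]
  linear_combination telesc α β n - Complex.cos_add (2*α*n + β) α + Complex.cos_add β α

lemma ae_sin_ne (a : ℤ) (ha : a ≠ 0) (m : ℂ) (hm : m ≠ 0) :
    ∀ᵐ u : ℝ, Complex.sin (π * (a:ℂ) * u / m) ≠ 0 := by
  have hcoef : (π * (a:ℂ)) / m ≠ 0 := by
    apply div_ne_zero (mul_ne_zero ?_ ?_) hm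
    · exact Complex.ofReal_ne_zero.2 Real.pi_ne_zero
    · exact_mod_cast ha
  have hS : {u : ℝ | Complex.sin (π * (a:ℂ) * u / m) = 0}.Countable := by
    have hsub : {u : ℝ | Complex.sin (π * (a:ℂ) * u / m) = 0}
        ⊆ ⋃ ℓ : ℤ, {u : ℝ | (π*(a:ℂ)*u/m) = ℓ * π} := by
      intro u hu
      rw [Set.mem_setOf_eq, Complex.sin_eq_zero_iff] at hu
      obtain ⟨ℓ, hℓ⟩ := hu
      exact Set.mem_iUnion.2 ⟨ℓ, hℓ⟩
    refine Set.Countable.mono hsub (Set.countable_iUnion fun ℓ => ?_)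
    apply Set.Subsingleton.countable
    intro u hu v hv
    simp only [Set.mem_setOf_eq] at hu hv
    have h1 : (π*(a:ℂ)/m) * u = (π*(a:ℂ)/m) * v := by
      have : (π*(a:ℂ)*u/m : ℂ) = π*(a:ℂ)*v/m := hu.trans hv.symm
      linear_combination this
    have := mul_left_cancel₀ hcoef h1
    exact_mod_cast this
  have h0 := hS.measure_zero (MeasureTheory.volume)
  rw [← MeasureTheory.compl_mem_ae_iff] at h0
  filter_upwards [h0] with u hu
  simpa using hu

lemma pointU (a b : ℤ) (n : ℕ) (m : ℂ) (u : ℝ)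
    (hα : Complex.sin (π * (a:ℂ) * u / m) ≠ 0) :
    (Complex.cos (2 * π * ((a : ℂ) * n + b) * u / m)
        - Complex.cos (2 * π * (b : ℂ) * u / m)) * Complex.cot (π * (a:ℂ) * u / m)
      = Complex.sin ((2*π*((a:ℂ)*n+b)/m) * u) - Complex.sin ((2*π*(b:ℂ)/m) * u)
        - 2 * ∑ j ∈ Finset.Icc 1 n, Complex.sin ((2*π*((a:ℂ)*j+b)/m) * u) := by
  have e1 : 2*π*((a:ℂ)*n+b)*u/m = 2*(π*(a:ℂ)*u/m)*(n:ℂ) + 2*π*(b:ℂ)*u/m := by ring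
  have e2 : (2*π*((a:ℂ)*n+b)/m)*(u:ℂ) = 2*(π*(a:ℂ)*u/m)*(n:ℂ) + 2*π*(b:ℂ)*u/m := by ring
  have e3 : (2*π*(b:ℂ)/m)*(u:ℂ) = 2*π*(b:ℂ)*u/m := by ring
  have e4 : ∀ j : ℕ, (2*π*((a:ℂ)*j+b)/m)*(u:ℂ)
      = 2*(π*(a:ℂ)*u/m)*(j:ℂ) + 2*π*(b:ℂ)*u/m := fun j => by ring
  rw [e1, e2, e3, Complex.cot_eq_cos_div_sin]
  simp only [e4]
  exact pointwise _ _ n hα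

lemma perj (k : ℕ) (P d I : ℂ) (hd : d ≠ 0)
    (hI : (P*d)^(2*k+1) * I = (-1)^(k+1) * ((2*k).factorial : ℂ) *
      (Complex.cos (P*d) - ∑ i ∈ Finset.range (k+1),
        (-1)^i * (P*d)^(2*i) / ((2*i).factorial : ℂ))) :
    (1 : ℂ)/d^(2*k+1) * Complex.cos (P*d)
      = (∑ i ∈ Finset.range (k+1),
          ((-1:ℂ)^(k-i) * P^(2*k-2*i) / ((2*k-2*i).factorial : ℂ)) * (1/d^(2*i+1)))
        + (-1)^(k+1) * P^(2*k+1) / ((2*k).factorial : ℂ) * I := by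
  have hF : ((2*k).factorial : ℂ) ≠ 0 := Nat.cast_ne_zero.2 (Nat.factorial_ne_zero _)
  have hrefl : (∑ i ∈ Finset.range (k+1),
          ((-1:ℂ)^(k-i) * P^(2*k-2*i) / ((2*k-2*i).factorial : ℂ)) * (1/d^(2*i+1)))
      = ∑ i ∈ Finset.range (k+1),
          ((-1:ℂ)^i * P^(2*i) / ((2*i).factorial : ℂ)) * (1/d^(2*(k-i)+1)) := by
    rw [← Finset.sum_range_reflect
      (fun i => ((-1:ℂ)^i * P^(2*i) / ((2*i).factorial : ℂ)) * (1/d^(2*(k-i)+1))) (k+1)]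
    refine Finset.sum_congr rfl fun j hj => ?_
    have hjk : j ≤ k := by
      have := Finset.mem_range.mp hj; omega
    rw [show k+1-1-j = k-j from by omega, show 2*k-2*j = 2*(k-j) from by omega,
      show k-(k-j) = j from by omega]
  rw [hrefl]
  have hSig : (∑ i ∈ Finset.range (k+1),
        ((-1:ℂ)^i * P^(2*i) / ((2*i).factorial : ℂ)) * (1/d^(2*(k-i)+1))) * d^(2*k+1)
      = ∑ i ∈ Finset.range (k+1), (-1:ℂ)^i * (P*d)^(2*i) / ((2*i).factorial : ℂ) := by
    rw [Finset.sum_mul]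
    refine Finset.sum_congr rfl fun i hi => ?_
    have hik : i ≤ k := by have := Finset.mem_range.mp hi; omega
    have hpow : (1:ℂ)/d^(2*(k-i)+1) * d^(2*k+1) = d^(2*i) := by
      rw [one_div, inv_mul_eq_div, div_eq_iff (pow_ne_zero _ hd), ← pow_add]
      congr 1; omega
    calc ((-1:ℂ)^i * P^(2*i) / ((2*i).factorial : ℂ)) * (1/d^(2*(k-i)+1)) * d^(2*k+1)
        = ((-1:ℂ)^i * P^(2*i) / ((2*i).factorial : ℂ)) * ((1/d^(2*(k-i)+1)) * d^(2*k+1)) := by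
          ring
      _ = (-1:ℂ)^i * (P*d)^(2*i) / ((2*i).factorial : ℂ) := by rw [hpow, mul_pow]; ring
  have hone : ((2*k).factorial : ℂ) * ((2*k).factorial : ℂ)⁻¹ = 1 := mul_inv_cancel₀ hF
  have hsq : ((-1:ℂ)^(k+1)) * ((-1:ℂ)^(k+1)) = 1 := by
    rw [← pow_add, show (k+1)+(k+1) = 2*(k+1) from by ring, pow_mul]; norm_num
  have key : Complex.cos (P*d)
      = ((∑ i ∈ Finset.range (k+1),
          ((-1:ℂ)^i * P^(2*i) / ((2*i).factorial : ℂ)) * (1/d^(2*(k-i)+1)))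
        + (-1)^(k+1) * P^(2*k+1) / ((2*k).factorial : ℂ) * I) * d^(2*k+1) := by
    linear_combination (-1 : ℂ) * hSig
      + (-(-1:ℂ)^(k+1) * ((2*k).factorial:ℂ)⁻¹) * hI
      + (-(Complex.cos (P*d) - ∑ i ∈ Finset.range (k+1),
          (-1:ℂ)^i * (P*d)^(2*i) / ((2*i).factorial : ℂ)) * ((-1:ℂ)^(k+1))^2) * hone
      + (-(Complex.cos (P*d) - ∑ i ∈ Finset.range (k+1),
          (-1:ℂ)^i * (P*d)^(2*i) / ((2*i).factorial : ℂ))) * hsq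
  rw [key]
  have hgen : ∀ X : ℂ, (1:ℂ)/d^(2*k+1) * (X * d^(2*k+1)) = X := fun X => by
    field_simp
  exact hgen _

lemma bdry (k : ℕ) (P d I : ℂ) (hd : d ≠ 0)
    (hI : (P*d)^(2*k+1) * I = (-1)^(k+1) * ((2*k).factorial : ℂ) *
      (Complex.cos (P*d) - ∑ i ∈ Finset.range (k+1),
        (-1)^i * (P*d)^(2*i) / ((2*i).factorial : ℂ))) :
    (-1:ℂ)^(k+1) * P^(2*k+1) / ((2*k).factorial : ℂ) * I
      = (1/(d^(2*k+1))) * (Complex.cos (P*d) - ∑ i ∈ Finset.range (k+1),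
          (-1:ℂ)^i * (P*d)^(2*i) / ((2*i).factorial : ℂ)) := by
  have hF : ((2*k).factorial : ℂ) ≠ 0 := Nat.cast_ne_zero.2 (Nat.factorial_ne_zero _)
  have hA : ((-1:ℂ)^(k+1)) ≠ 0 := pow_ne_zero _ (by norm_num)
  have h2 : Complex.cos (P*d) - ∑ i ∈ Finset.range (k+1),
        (-1:ℂ)^i * (P*d)^(2*i) / ((2*i).factorial : ℂ)
      = (P*d)^(2*k+1) * I / ((-1:ℂ)^(k+1) * ((2*k).factorial : ℂ)) := by
    rw [eq_div_iff (mul_ne_zero hA hF)]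
    linear_combination -hI
  rw [h2]
  have hsq : ((-1:ℂ)^(k+1)) * ((-1:ℂ)^(k+1)) = 1 := by
    rw [← pow_add, show (k+1)+(k+1) = 2*(k+1) from by ring, pow_mul]; norm_num
  field_simp
  linear_combination (P^(2*k+1) * d^(2*k+1) * I) * hsq

theorem stmt_16 (a b : ℤ) (ha : a ≠ 0) (hb : b ≠ 0) (n : ℕ) (hn : 0 < n)
    (h : ∀ j : ℤ, 1 ≤ j → j ≤ n → a * j + b ≠ 0) (m : ℂ) (hm : m ≠ 0) (k : ℕ) :
    ∑ j ∈ Finset.Icc 1 n,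
        (1 : ℂ) / (a * j + b) ^ (2 * k + 1) *
          Complex.cos (2 * π * ((a : ℂ) * j + b) / m) =
      -(1 / (2 * (b : ℂ) ^ (2 * k + 1))) *
          (Complex.cos (2 * π * (b : ℂ) / m) -
            ∑ j ∈ Finset.range (k + 1),
              (-1 : ℂ) ^ j * (2 * π * (b : ℂ) / m) ^ (2 * j) / (Nat.factorial (2 * j)))
      + (1 / (2 * ((a : ℂ) * n + b) ^ (2 * k + 1))) *
          (Complex.cos (2 * π * ((a : ℂ) * n + b) / m) -
            ∑ j ∈ Finset.range (k + 1),
              (-1 : ℂ) ^ j * (2 * π * ((a : ℂ) * n + b) / m) ^ (2 * j) /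
                (Nat.factorial (2 * j)))
      + (∑ j ∈ Finset.range (k + 1),
          ((-1 : ℂ) ^ (k - j) * (2 * π / m) ^ (2 * k - 2 * j) /
              (Nat.factorial (2 * k - 2 * j))) *
            ∑ i ∈ Finset.Icc 1 n, (1 : ℂ) / (a * i + b) ^ (2 * j + 1))
      + ((-1 : ℂ) ^ k * (2 * π / m) ^ (2 * k + 1) / (2 * (Nat.factorial (2 * k)))) *
          ∫ u in (0:ℝ)..1,
            (1 - (u : ℂ)) ^ (2 * k) *
              (Complex.cos (2 * π * ((a : ℂ) * n + b) * u / m)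
                - Complex.cos (2 * π * (b : ℂ) * u / m)) *
              Complex.cot (π * (a : ℂ) * u / m) := by
  have hrule : ∀ x : ℂ, 2*(π:ℂ)*x/m = 2*π/m*x := fun x => by ring
  simp only [hrule]
  have hd : ∀ j : ℕ, j ∈ Finset.Icc 1 n → ((a:ℂ)*j+b) ≠ 0 := by
    intro j hj
    obtain ⟨h1, h2⟩ := Finset.mem_Icc.mp hj
    have h3 := h j (by exact_mod_cast h1) (by exact_mod_cast h2)
    have h4 : ((a*(j:ℤ)+b : ℤ) : ℂ) ≠ 0 := Int.cast_ne_zero.2 h3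
    push_cast at h4; exact h4
  have hdN : ((a:ℂ)*n+b) ≠ 0 := hd n (Finset.mem_Icc.mpr ⟨hn, le_refl n⟩)
  have hdB : ((b:ℂ)) ≠ 0 := Int.cast_ne_zero.2 hb
  have hint : ∀ c : ℂ, Continuous (fun u : ℝ => (1-(u:ℂ))^(2*k) * Complex.sin (c*u)) := by
    intro c; fun_prop
  -- step 1 : rewrite the LHS sum using perj + taylorA
  have hLHS : ∑ j ∈ Finset.Icc 1 n,
        (1:ℂ)/((a:ℂ)*j+b)^(2*k+1) * Complex.cos (2*π/m*((a:ℂ)*j+b))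
      = (∑ i ∈ Finset.range (k+1),
            ((-1:ℂ)^(k-i) * (2*π/m)^(2*k-2*i) / ((2*k-2*i).factorial : ℂ))
            * ∑ j ∈ Finset.Icc 1 n, (1:ℂ)/((a:ℂ)*j+b)^(2*i+1))
        + (-1:ℂ)^(k+1) * (2*π/m)^(2*k+1) / ((2*k).factorial : ℂ)
            * ∑ j ∈ Finset.Icc 1 n, ∫ u in (0:ℝ)..1,
                (1-(u:ℂ))^(2*k) * Complex.sin ((2*π/m*((a:ℂ)*j+b)) * u) := by
    calc ∑ j ∈ Finset.Icc 1 n,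
          (1:ℂ)/((a:ℂ)*j+b)^(2*k+1) * Complex.cos (2*π/m*((a:ℂ)*j+b))
        = ∑ j ∈ Finset.Icc 1 n,
            ((∑ i ∈ Finset.range (k+1),
              ((-1:ℂ)^(k-i) * (2*π/m)^(2*k-2*i) / ((2*k-2*i).factorial : ℂ))
                * ((1:ℂ)/((a:ℂ)*j+b)^(2*i+1)))
              + (-1:ℂ)^(k+1) * (2*π/m)^(2*k+1) / ((2*k).factorial : ℂ)
                * ∫ u in (0:ℝ)..1,
                    (1-(u:ℂ))^(2*k) * Complex.sin ((2*π/m*((a:ℂ)*j+b)) * u)) := by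
          refine Finset.sum_congr rfl fun j hj => ?_
          exact perj k (2*π/m) ((a:ℂ)*j+b) _ (hd j hj) (taylorA (2*π/m*((a:ℂ)*j+b)) k)
      _ = _ := by
          rw [Finset.sum_add_distrib, Finset.sum_comm]
          simp only [← Finset.mul_sum]
  -- step 2 : the cotangent integral
  have hcongr : ∫ u in (0:ℝ)..1,
        (1-(u:ℂ))^(2*k) * (Complex.cos (2*π*((a:ℂ)*n+b)*u/m) - Complex.cos (2*π*(b:ℂ)*u/m))
          * Complex.cot (π*(a:ℂ)*u/m)
      = ∫ u in (0:ℝ)..1,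
          (1-(u:ℂ))^(2*k) * (Complex.sin ((2*π/m*((a:ℂ)*n+b))*u) - Complex.sin ((2*π/m*(b:ℂ))*u)
            - 2*∑ j ∈ Finset.Icc 1 n, Complex.sin ((2*π/m*((a:ℂ)*j+b))*u)) := by
    apply intervalIntegral.integral_congr_ae
    filter_upwards [ae_sin_ne a ha m hm] with u hu _
    rw [mul_assoc]
    have hp := pointU a b n m u hu
    simp only [hrule] at hp
    rw [hp]
  have hsplit : ∫ u in (0:ℝ)..1,
        (1-(u:ℂ))^(2*k) * (Complex.sin ((2*π/m*((a:ℂ)*n+b))*u) - Complex.sin ((2*π/m*(b:ℂ))*u)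
          - 2*∑ j ∈ Finset.Icc 1 n, Complex.sin ((2*π/m*((a:ℂ)*j+b))*u))
      = (∫ u in (0:ℝ)..1, (1-(u:ℂ))^(2*k) * Complex.sin ((2*π/m*((a:ℂ)*n+b))*u))
        - (∫ u in (0:ℝ)..1, (1-(u:ℂ))^(2*k) * Complex.sin ((2*π/m*(b:ℂ))*u))
        - 2 * ∑ j ∈ Finset.Icc 1 n, ∫ u in (0:ℝ)..1,
            (1-(u:ℂ))^(2*k) * Complex.sin ((2*π/m*((a:ℂ)*j+b)) * u) := by
    have e : (fun u : ℝ => (1-(u:ℂ))^(2*k) * (Complex.sin ((2*π/m*((a:ℂ)*n+b))*u)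
          - Complex.sin ((2*π/m*(b:ℂ))*u)
          - 2*∑ j ∈ Finset.Icc 1 n, Complex.sin ((2*π/m*((a:ℂ)*j+b))*u)))
        = fun u : ℝ => ((1-(u:ℂ))^(2*k) * Complex.sin ((2*π/m*((a:ℂ)*n+b))*u)
            - (1-(u:ℂ))^(2*k) * Complex.sin ((2*π/m*(b:ℂ))*u))
          - 2*∑ j ∈ Finset.Icc 1 n,
              ((1-(u:ℂ))^(2*k) * Complex.sin ((2*π/m*((a:ℂ)*j+b))*u)) := by
      funext u
      conv_rhs => rw [← Finset.mul_sum]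
      ring
    rw [e]
    have hcs : Continuous (fun u : ℝ => ∑ j ∈ Finset.Icc 1 n,
        ((1-(u:ℂ))^(2*k) * Complex.sin ((2*π/m*((a:ℂ)*j+b))*u))) :=
      continuous_finset_sum _ fun j _ => hint _
    rw [intervalIntegral.integral_sub
        (((hint _).intervalIntegrable 0 1).sub ((hint _).intervalIntegrable 0 1))
        ((hcs.intervalIntegrable 0 1).const_mul _),
      intervalIntegral.integral_sub ((hint _).intervalIntegrable 0 1)
        ((hint _).intervalIntegrable 0 1),
      intervalIntegral.integral_const_mul,
      intervalIntegral.integral_finset_sum (fun j _ => (hint _).intervalIntegrable 0 1)]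
  have hcot := hcongr.trans hsplit
  -- step 3 : boundary terms
  have hN := bdry k (2*π/m) ((a:ℂ)*n+b) _ hdN (taylorA (2*π/m*((a:ℂ)*n+b)) k)
  have hB := bdry k (2*π/m) ((b:ℂ)) _ hdB (taylorA (2*π/m*(b:ℂ)) k)
  have hhN : (1:ℂ)/(2*((a:ℂ)*(n:ℂ)+(b:ℂ))^(2*k+1)) = 1/2 * (1/((a:ℂ)*(n:ℂ)+(b:ℂ))^(2*k+1)) := by
    rw [one_div, mul_inv]; ring
  have hhB : (1:ℂ)/(2*((b:ℂ))^(2*k+1)) = 1/2 * (1/((b:ℂ))^(2*k+1)) := by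
    rw [one_div, mul_inv]; ring
  rw [hLHS, hhN, hhB]
  linear_combination (-((-1:ℂ)^k * (2*π/m)^(2*k+1) / (2*((2*k).factorial:ℂ)))) * hcot
    + (1/2 : ℂ) * hN - (1/2 : ℂ) * hB
end

section
/- Let k ≥ 1 be an integer, m a nonzero complex number, n a positive integer, and b a complex number with b ∉ {0, -1, -2, …, -n}. Writing HP_{r}(n) = ∑_{i=1}^{n} 1/(i+b)^{r}, the partial sums of Lerch's Φ function satisfy: ∑_{j=1}^{n} e^{m(j+b)}/(j+b)^{k} = -e^{mb}/(2b^{k}) + e^{m(n+b)}/(2(n+b)^{k}) + (1/(2b^{k})) ∑_{j=0}^{k} (mb)^{j}/j! - (1/(2(n+b)^{k})) ∑_{j=0}^{k} (m(n+b))^{j}/j! + ∑_{j=1}^{k} (m^{k-j}/(k-j)!)·HP_{j}(n) + (m^{k}/(2(k-1)!)) ∫_{0}^{1} (1-u)^{k-1}·( e^{m(n+b)u} - e^{mbu} )·coth(mu/2) du. -/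
open Complex

/-- The complex hyperbolic cotangent, `coth z = cosh z / sinh z`. -/
noncomputable def Complex.coth (z : ℂ) : ℂ := Complex.cosh z / Complex.sinh z

open MeasureTheory intervalIntegral
open Complex intervalIntegral

lemma int_exp (z : ℂ) (hz : z ≠ 0) : ∀ k : ℕ,
    ∫ u in (0:ℝ)..1, (1 - (u:ℂ))^k * Complex.exp (z * u) =
      (k.factorial : ℂ) / z^(k+1) *
        (Complex.exp z - ∑ r ∈ Finset.range (k+1), z^r / r.factorial)
  | 0 => by
    simp only [pow_zero, one_mul]
    rw [integral_exp_mul_complex hz]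
    simp [Nat.factorial]
    ring
  | (k+1) => by
    have ih := int_exp z hz k
    have hu : ∀ x : ℝ, HasDerivAt (fun x : ℝ => (1 - (x:ℂ))^(k+1))
        (-(k+1) * (1 - (x:ℂ))^k) x := by
      intro x
      have h1 : HasDerivAt (fun w : ℂ => (1 - w)^(k+1))
          (((k+1:ℕ):ℂ) * (1 - (x:ℂ))^k * (-1)) (x:ℂ) :=
        ((hasDerivAt_id (x:ℂ)).const_sub 1).pow (k+1)
      have := h1.comp_ofReal
      convert this using 1
      push_cast; ring
    have hv : ∀ x : ℝ, HasDerivAt (fun x : ℝ => Complex.exp (z * x) / z)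
        (Complex.exp (z * x)) x := by
      intro x
      have h1 : HasDerivAt (fun x : ℝ => z * (x:ℂ)) z x := by
        simpa using ((hasDerivAt_id x).ofReal_comp.const_mul z)
      have := (h1.cexp).div_const z
      simpa [mul_div_assoc, mul_div_cancel_left₀ _ hz, mul_comm] using this
    have hparts := intervalIntegral.integral_mul_deriv_eq_deriv_mul (a := (0:ℝ)) (b := (1:ℝ))
      (u := fun x : ℝ => (1 - (x:ℂ))^(k+1)) (v := fun x => Complex.exp (z*x)/z)
      (u' := fun x : ℝ => -(k+1) * (1 - (x:ℂ))^k) (v' := fun x => Complex.exp (z*x))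
      (fun x _ => hu x) (fun x _ => hv x)
      (by apply Continuous.intervalIntegrable; continuity)
      (by apply Continuous.intervalIntegrable; continuity)
    rw [hparts]
    have : (∫ u in (0:ℝ)..1, -(k+1 : ℂ) * (1 - (u:ℂ))^k * (Complex.exp (z*u)/z))
        = (-(k+1:ℂ)/z) * ∫ u in (0:ℝ)..1, (1 - (u:ℂ))^k * Complex.exp (z*u) := by
      rw [← intervalIntegral.integral_const_mul]
      congr 1; ext u; ring
    rw [this, ih, Finset.sum_range_succ (n := k+1)]
    simp only [Complex.ofReal_one, Complex.ofReal_zero, sub_self, sub_zero, mul_zero, mul_one,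
      Complex.exp_zero, one_pow, zero_pow (by omega : k + 1 ≠ 0), zero_mul]
    have hfac : ((k+1).factorial : ℂ) = (k+1) * k.factorial := by push_cast [Nat.factorial]; ring
    have hfne : (k.factorial : ℂ) ≠ 0 := by exact_mod_cast Nat.factorial_ne_zero k
    have h2 : ((k:ℂ)+1) ≠ 0 := Nat.cast_add_one_ne_zero k
    field_simp [hfac, hfne, h2]
    rw [hfac]
    ring
lemma bad_set_meas (m : ℂ) (hm : m ≠ 0) :
    volume {u : ℝ | Complex.sinh (m * u / 2) = 0} = 0 := by
  have hc : ({u : ℝ | Complex.sinh (m * u / 2) = 0}).Countable := by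
    have hsub : {u : ℝ | Complex.sinh (m * u / 2) = 0} ⊆
        ⋃ q : ℤ, {u : ℝ | (u : ℂ) = q * (2 * Real.pi * I) / m} := by
      intro u hu
      simp only [Set.mem_setOf_eq] at hu
      have h1 : Complex.exp (m * u / 2) - Complex.exp (-(m * u / 2)) = 0 := by
        rw [Complex.sinh] at hu
        field_simp at hu
        linear_combination hu
      have h2 : Complex.exp (m * u / 2) * Complex.exp (m * u / 2) = 1 := by
        have h3 := sub_eq_zero.mp h1
        nth_rewrite 2 [h3]
        rw [← Complex.exp_add, show m * (u:ℂ) / 2 + -(m * u / 2) = 0 by ring,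
          Complex.exp_zero]
      rw [← Complex.exp_add, Complex.exp_eq_one_iff] at h2
      obtain ⟨q, hq⟩ := h2
      refine Set.mem_iUnion.2 ⟨q, ?_⟩
      simp only [Set.mem_setOf_eq]
      field_simp
      field_simp at hq
      linear_combination (1/2 : ℂ) * hq
    refine Set.Countable.mono hsub (Set.countable_iUnion fun q => ?_)
    refine Set.Subsingleton.countable fun x hx y hy => ?_
    simp only [Set.mem_setOf_eq] at hx hy
    exact_mod_cast hx.trans hy.symm
  exact hc.measure_zero _

lemma pointwise_eq (m : ℂ) (n : ℕ) (b : ℂ) (u : ℝ)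
    (hs : Complex.sinh (m * u / 2) ≠ 0) :
    (Complex.exp (m * ((n:ℂ) + b) * u) - Complex.exp (m * b * u)) *
      Complex.coth (m * u / 2) =
    2 * ∑ j ∈ Finset.Icc 1 n, Complex.exp (m * ((j:ℂ) + b) * u)
      - Complex.exp (m * ((n:ℂ) + b) * u) + Complex.exp (m * b * u) := by
  set Y : ℂ := Complex.exp (m * u / 2) with hYdef
  have hY : Y ≠ 0 := Complex.exp_ne_zero _
  have hsinh : Complex.sinh (m * u / 2) = (Y^2 - 1) / (2 * Y) := by
    rw [Complex.sinh, Complex.exp_neg, ← hYdef]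
    field_simp
  have hcosh : Complex.cosh (m * u / 2) = (Y^2 + 1) / (2 * Y) := by
    rw [Complex.cosh, Complex.exp_neg, ← hYdef]
    field_simp
  have hY1 : Y^2 - 1 ≠ 0 := by
    intro h
    apply hs
    rw [hsinh, h, zero_div]
  have hmu : Complex.exp (m * u) = Y^2 := by
    rw [show m * (u:ℂ) = m * u / 2 + m * u / 2 by ring, Complex.exp_add, ← hYdef]
    ring
  have hexp : ∀ j : ℕ, Complex.exp (m * ((j:ℂ) + b) * u)
      = Complex.exp (m * b * u) * (Y^2)^j := by
    intro j
    rw [← hmu, ← Complex.exp_nat_mul, ← Complex.exp_add]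
    congr 1
    push_cast
    ring
  have hsum : ∑ j ∈ Finset.Icc 1 n, Complex.exp (m * ((j:ℂ) + b) * u)
      = Complex.exp (m * b * u) * (Y^2 * ((Y^2)^n - 1) / (Y^2 - 1)) := by
    rw [Finset.sum_congr rfl fun j _ => hexp j, ← Finset.mul_sum]
    congr 1
    have : ∑ j ∈ Finset.Icc 1 n, (Y^2)^j = ∑ j ∈ Finset.range n, (Y^2)^(1+j) := by
      rw [← Finset.Ico_add_one_right_eq_Icc, Finset.sum_Ico_eq_sum_range]
      simp [add_comm]
    rw [this]
    simp_rw [pow_add, pow_one]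
    rw [← Finset.mul_sum, geom_sum_eq (by intro h; exact hY1 (by rw [h]; ring)) n]
    ring
  rw [hsum, hexp n, Complex.coth, hsinh, hcosh]
  field_simp
  ring

lemma split_integral (m : ℂ) (hm : m ≠ 0) (n : ℕ) (b : ℂ) (K : ℕ) :
    (∫ u in (0:ℝ)..1, (1 - (u:ℂ))^K *
        (Complex.exp (m * ((n:ℂ) + b) * u) - Complex.exp (m * b * u)) *
        Complex.coth (m * u / 2)) =
      2 * ∑ j ∈ Finset.Icc 1 n,
          (∫ u in (0:ℝ)..1, (1 - (u:ℂ))^K * Complex.exp (m * ((j:ℂ) + b) * u))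
        - (∫ u in (0:ℝ)..1, (1 - (u:ℂ))^K * Complex.exp (m * ((n:ℂ) + b) * u))
        + ∫ u in (0:ℝ)..1, (1 - (u:ℂ))^K * Complex.exp (m * b * u) := by
  have hcont : ∀ c : ℂ, Continuous fun u : ℝ => (1 - (u:ℂ))^K * Complex.exp (m * c * u) := by
    intro c; continuity
  have hint : ∀ c : ℂ, IntervalIntegrable
      (fun u : ℝ => (1 - (u:ℂ))^K * Complex.exp (m * c * u)) volume 0 1 :=
    fun c => (hcont c).intervalIntegrable 0 1
  have step1 : (∫ u in (0:ℝ)..1, (1 - (u:ℂ))^K *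
        (Complex.exp (m * ((n:ℂ) + b) * u) - Complex.exp (m * b * u)) *
        Complex.coth (m * u / 2)) =
      ∫ u in (0:ℝ)..1,
        ((∑ j ∈ Finset.Icc 1 n, 2 * ((1 - (u:ℂ))^K * Complex.exp (m * ((j:ℂ) + b) * u)))
          - (1 - (u:ℂ))^K * Complex.exp (m * ((n:ℂ) + b) * u)
          + (1 - (u:ℂ))^K * Complex.exp (m * b * u)) := by
    apply intervalIntegral.integral_congr_ae
    have hae : ∀ᵐ u : ℝ, Complex.sinh (m * u / 2) ≠ 0 := by
      rw [MeasureTheory.ae_iff]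
      simpa [not_not] using bad_set_meas m hm
    filter_upwards [hae] with u hu _
    have hpt := pointwise_eq m n b u hu
    calc (1 - (u:ℂ))^K * (Complex.exp (m * ((n:ℂ) + b) * u) - Complex.exp (m * b * u)) *
          Complex.coth (m * u / 2)
        = (1 - (u:ℂ))^K * ((Complex.exp (m * ((n:ℂ) + b) * u) - Complex.exp (m * b * u)) *
          Complex.coth (m * u / 2)) := by ring
      _ = (1 - (u:ℂ))^K * (2 * ∑ j ∈ Finset.Icc 1 n, Complex.exp (m * ((j:ℂ) + b) * u)
            - Complex.exp (m * ((n:ℂ) + b) * u) + Complex.exp (m * b * u)) := by rw [hpt]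
      _ = 2 * ((1 - (u:ℂ))^K * ∑ j ∈ Finset.Icc 1 n, Complex.exp (m * ((j:ℂ) + b) * u))
            - (1 - (u:ℂ))^K * Complex.exp (m * ((n:ℂ) + b) * u)
            + (1 - (u:ℂ))^K * Complex.exp (m * b * u) := by ring
      _ = _ := by
            rw [Finset.mul_sum, Finset.mul_sum]
  rw [step1]
  have hintsum : IntervalIntegrable
      (fun u : ℝ => ∑ j ∈ Finset.Icc 1 n, 2 * ((1 - (u:ℂ))^K * Complex.exp (m * ((j:ℂ) + b) * u)))
      volume 0 1 := by
    apply Continuous.intervalIntegrable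
    apply continuous_finset_sum
    intro j _
    exact continuous_const.mul (hcont _)
  rw [intervalIntegral.integral_add ((hintsum.sub (hint _))) (hint _),
    intervalIntegral.integral_sub hintsum (hint _)]
  have hfs : (∫ x in (0:ℝ)..1, ∑ j ∈ Finset.Icc 1 n,
        2 * ((1 - (x:ℂ))^K * Complex.exp (m * ((j:ℂ) + b) * x)))
      = ∑ j ∈ Finset.Icc 1 n, ∫ x in (0:ℝ)..1,
          2 * ((1 - (x:ℂ))^K * Complex.exp (m * ((j:ℂ) + b) * x)) :=
    intervalIntegral.integral_finset_sum
      (fun j _ => (continuous_const.mul (hcont ((j:ℂ) + b))).intervalIntegrable 0 1)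
  rw [hfs]
  congr 2
  rw [Finset.mul_sum]
  exact Finset.sum_congr rfl fun j _ => (intervalIntegral.integral_const_mul 2 _)

lemma hswap_lemma (m : ℂ) (K : ℕ) (c : ℂ) (hc : c ≠ 0) :
    (∑ r ∈ Finset.range (K+1), (m*c)^r / (Nat.factorial r : ℂ)) / c^(K+1)
    = ∑ j ∈ Finset.Icc 1 (K+1), m^(K+1-j) / (Nat.factorial (K+1-j) : ℂ) * (1 / c^j) := by
  rw [Finset.sum_div]
  apply Finset.sum_nbij' (i := fun r => K+1-r) (j := fun j => K+1-j)
  · intro r hr; simp only [Finset.mem_range] at hr; simp only [Finset.mem_Icc]; omega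
  · intro j hj; simp only [Finset.mem_Icc] at hj; simp only [Finset.mem_range]; omega
  · intro r hr; simp only [Finset.mem_range] at hr; omega
  · intro j hj; simp only [Finset.mem_Icc] at hj; omega
  · intro r hr
    simp only [Finset.mem_range] at hr
    rw [show K+1-(K+1-r) = r by omega]
    have hpow : c^(K+1-r) * c^r = c^(K+1) := pow_sub_mul_pow c (by omega)
    have hfne : ((Nat.factorial r : ℂ)) ≠ 0 := by exact_mod_cast Nat.factorial_ne_zero r
    field_simp
    rw [mul_pow, ← hpow]
    ring

theorem stmt_18 (k : ℕ) (hk : 1 ≤ k) (m : ℂ) (hm : m ≠ 0) (n : ℕ) (hn : 0 < n)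
    (b : ℂ) (hb : ∀ j : ℕ, j ≤ n → b ≠ -(j : ℂ)) :
    ∑ j ∈ Finset.Icc 1 n, Complex.exp (m * (j + b)) / ((j : ℂ) + b) ^ k =
      -(Complex.exp (m * b) / (2 * b ^ k))
      + Complex.exp (m * ((n : ℂ) + b)) / (2 * ((n : ℂ) + b) ^ k)
      + (1 / (2 * b ^ k)) * ∑ j ∈ Finset.range (k + 1), (m * b) ^ j / (Nat.factorial j)
      - (1 / (2 * ((n : ℂ) + b) ^ k)) *
          ∑ j ∈ Finset.range (k + 1), (m * ((n : ℂ) + b)) ^ j / (Nat.factorial j)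
      + (∑ j ∈ Finset.Icc 1 k,
          (m ^ (k - j) / (Nat.factorial (k - j))) *
            ∑ i ∈ Finset.Icc 1 n, (1 : ℂ) / ((i : ℂ) + b) ^ j)
      + (m ^ k / (2 * (Nat.factorial (k - 1)))) *
          ∫ u in (0:ℝ)..1,
            (1 - (u : ℂ)) ^ (k - 1) *
              (Complex.exp (m * ((n : ℂ) + b) * u) - Complex.exp (m * b * u)) *
              Complex.coth (m * u / 2) := by
  obtain ⟨K, rfl⟩ : ∃ K, k = K + 1 := ⟨k - 1, by omega⟩
  simp only [Nat.add_sub_cancel]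
  have hb0 : b ≠ 0 := by simpa using hb 0 (by omega)
  have hz : ∀ j : ℕ, j ≤ n → ((j:ℂ) + b) ≠ 0 := by
    intro j hj h
    exact hb j hj (by linear_combination h)
  have hN0 : ((n:ℂ) + b) ≠ 0 := hz n le_rfl
  have hKfne : ((K.factorial : ℂ)) ≠ 0 := by exact_mod_cast Nat.factorial_ne_zero K
  have hIval : ∀ c : ℂ, c ≠ 0 →
      (∫ u in (0:ℝ)..1, (1 - (u:ℂ))^K * Complex.exp (m * c * u)) =
        (K.factorial : ℂ) / (m*c)^(K+1) *
          (Complex.exp (m*c) - ∑ r ∈ Finset.range (K+1), (m*c)^r / (Nat.factorial r : ℂ)) :=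
    fun c hc => int_exp (m*c) (mul_ne_zero hm hc) K
  have hT : ∀ c : ℂ, c ≠ 0 →
      m^(K+1) / (2 * (K.factorial : ℂ)) *
        ((K.factorial : ℂ) / (m*c)^(K+1) *
          (Complex.exp (m*c) - ∑ r ∈ Finset.range (K+1), (m*c)^r / (Nat.factorial r : ℂ)))
      = (Complex.exp (m*c) - ∑ r ∈ Finset.range (K+1), (m*c)^r / (Nat.factorial r : ℂ))
          / (2 * c^(K+1)) := by
    intro c hc
    rw [mul_pow]
    field_simp
  rw [split_integral m hm n b K]
  have hIs : (∑ j ∈ Finset.Icc 1 n,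
        ∫ u in (0:ℝ)..1, (1 - (u:ℂ))^K * Complex.exp (m * ((j:ℂ) + b) * u))
      = ∑ j ∈ Finset.Icc 1 n, (K.factorial : ℂ) / (m*((j:ℂ)+b))^(K+1) *
          (Complex.exp (m*((j:ℂ)+b)) -
            ∑ r ∈ Finset.range (K+1), (m*((j:ℂ)+b))^r / (Nat.factorial r : ℂ)) :=
    Finset.sum_congr rfl fun j hj => hIval _ (hz j (Finset.mem_Icc.mp hj).2)
  rw [hIs, hIval _ hN0, hIval _ hb0]
  set A := m^(K+1) / (2 * (K.factorial : ℂ)) with hAdef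
  have hA : A *
      (2 * (∑ j ∈ Finset.Icc 1 n, (K.factorial : ℂ) / (m*((j:ℂ)+b))^(K+1) *
          (Complex.exp (m*((j:ℂ)+b)) - ∑ r ∈ Finset.range (K+1), (m*((j:ℂ)+b))^r / (Nat.factorial r : ℂ)))
        - (K.factorial : ℂ) / (m*((n:ℂ)+b))^(K+1) *
          (Complex.exp (m*((n:ℂ)+b)) - ∑ r ∈ Finset.range (K+1), (m*((n:ℂ)+b))^r / (Nat.factorial r : ℂ))
        + (K.factorial : ℂ) / (m*b)^(K+1) *
          (Complex.exp (m*b) - ∑ r ∈ Finset.range (K+1), (m*b)^r / (Nat.factorial r : ℂ)))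
      = (∑ j ∈ Finset.Icc 1 n,
          (Complex.exp (m*((j:ℂ)+b)) - ∑ r ∈ Finset.range (K+1), (m*((j:ℂ)+b))^r / (Nat.factorial r : ℂ))
            / (((j:ℂ)+b)^(K+1)))
        - (Complex.exp (m*((n:ℂ)+b)) - ∑ r ∈ Finset.range (K+1), (m*((n:ℂ)+b))^r / (Nat.factorial r : ℂ))
            / (2*((n:ℂ)+b)^(K+1))
        + (Complex.exp (m*b) - ∑ r ∈ Finset.range (K+1), (m*b)^r / (Nat.factorial r : ℂ))
            / (2*b^(K+1)) := by
    have h1 : ∀ X Y S : ℂ, A * (2 * S - X + Y) = 2 * (A * S) - A * X + A * Y := by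
      intro X Y S; ring
    rw [h1, Finset.mul_sum, hT _ hN0, hT _ hb0]
    congr 2
    rw [Finset.mul_sum]
    apply Finset.sum_congr rfl
    intro j hj
    rw [hT _ (hz j (Finset.mem_Icc.mp hj).2), ← mul_div_assoc,
      mul_div_mul_left _ _ (two_ne_zero)]
  rw [hA]
  have hH : (∑ j ∈ Finset.Icc 1 (K+1),
        (m ^ (K+1-j) / (Nat.factorial (K+1-j) : ℂ)) *
          ∑ i ∈ Finset.Icc 1 n, (1:ℂ) / ((i:ℂ) + b) ^ j)
      = ∑ i ∈ Finset.Icc 1 n,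
          (∑ r ∈ Finset.range (K+1), (m*((i:ℂ)+b))^r / (Nat.factorial r : ℂ)) / ((i:ℂ)+b)^(K+1) := by
    simp_rw [Finset.mul_sum]
    rw [Finset.sum_comm]
    apply Finset.sum_congr rfl
    intro i hi
    rw [hswap_lemma m K ((i:ℂ)+b) (hz i (Finset.mem_Icc.mp hi).2)]
  rw [hH]
  have hcomb : (∑ j ∈ Finset.Icc 1 n,
        (∑ r ∈ Finset.range (K+1), (m*((j:ℂ)+b))^r / (Nat.factorial r : ℂ)) / ((j:ℂ)+b)^(K+1))
      + ∑ j ∈ Finset.Icc 1 n,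
        (Complex.exp (m*((j:ℂ)+b)) - ∑ r ∈ Finset.range (K+1), (m*((j:ℂ)+b))^r / (Nat.factorial r : ℂ))
          / (((j:ℂ)+b)^(K+1))
      = ∑ j ∈ Finset.Icc 1 n, Complex.exp (m * ((j:ℂ) + b)) / ((j : ℂ) + b) ^ (K+1) := by
    rw [← Finset.sum_add_distrib]
    apply Finset.sum_congr rfl
    intro j hj
    rw [← add_div]
    congr 1
    ring
  have hK1fne : (((K+1).factorial : ℂ)) ≠ 0 := by exact_mod_cast Nat.factorial_ne_zero (K+1)
  have hgrp : ∀ c : ℂ, c ≠ 0 →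
      (1 / (2 * c^(K+1))) *
          ((∑ r ∈ Finset.range (K+1), (m*c)^r / (Nat.factorial r : ℂ))
            + (m*c)^(K+1) / (Nat.factorial (K+1) : ℂ))
        - Complex.exp (m*c) / (2 * c^(K+1))
        + (Complex.exp (m*c) - ∑ r ∈ Finset.range (K+1), (m*c)^r / (Nat.factorial r : ℂ))
            / (2 * c^(K+1))
      = m^(K+1) / (2 * (Nat.factorial (K+1) : ℂ)) := by
    intro c hc
    have hcp : c^(K+1) ≠ 0 := pow_ne_zero _ hc
    have h2 : (m*c)^(K+1) / (Nat.factorial (K+1) : ℂ) / (2*c^(K+1))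
        = m^(K+1) / (2*(Nat.factorial (K+1) : ℂ)) := by
      rw [mul_pow, div_div,
        show (Nat.factorial (K+1) : ℂ) * (2*c^(K+1))
          = c^(K+1) * (2*(Nat.factorial (K+1) : ℂ)) from by ring,
        mul_comm (m^(K+1)) (c^(K+1)), mul_div_mul_left _ _ hcp]
    linear_combination h2
  have hscal :
      -(Complex.exp (m * b) / (2 * b ^ (K+1)))
      + Complex.exp (m * ((n : ℂ) + b)) / (2 * ((n : ℂ) + b) ^ (K+1))
      + (1 / (2 * b ^ (K+1))) * ∑ j ∈ Finset.range (K+1+1), (m * b) ^ j / (Nat.factorial j : ℂ)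
      - (1 / (2 * ((n : ℂ) + b) ^ (K+1))) *
          ∑ j ∈ Finset.range (K+1+1), (m * ((n : ℂ) + b)) ^ j / (Nat.factorial j : ℂ)
      - (Complex.exp (m*((n:ℂ)+b)) - ∑ r ∈ Finset.range (K+1), (m*((n:ℂ)+b))^r / (Nat.factorial r : ℂ))
          / (2*((n:ℂ)+b)^(K+1))
      + (Complex.exp (m*b) - ∑ r ∈ Finset.range (K+1), (m*b)^r / (Nat.factorial r : ℂ))
          / (2*b^(K+1)) = 0 := by
    rw [Finset.sum_range_succ, Finset.sum_range_succ
      (f := fun j => (m * ((n:ℂ) + b)) ^ j / (Nat.factorial j : ℂ))]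
    linear_combination (hgrp b hb0) - (hgrp ((n:ℂ)+b) hN0)
  linear_combination -hcomb - hscal
end

section
/- Let k ≥ 1 be an integer, m a nonzero complex number, and n a positive integer. Writing H_{r}(n) = ∑_{i=1}^{n} 1/i^{r} for the generalized harmonic numbers, the partial sums of the polylogarithm satisfy: ∑_{j=1}^{n} e^{mj}/j^{k} = e^{mn}/(2n^{k}) - (1/(2n^{k})) ∑_{j=0}^{k} (mn)^{j}/j! + ∑_{j=1}^{k} (m^{k-j}/(k-j)!)·H_{j}(n) + (m^{k}/(2(k-1)!)) ∫_{0}^{1} (1-u)^{k-1}·( e^{mnu} - 1 )·coth(mu/2) du. -/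
open Complex intervalIntegral

private lemma polyid (x : ℂ) (n : ℕ) :
    (x ^ n - 1) * (x + 1) = (2 * ∑ j ∈ Finset.Icc 1 n, x ^ j + 1 - x ^ n) * (x - 1) := by
  induction n with
  | zero => simp
  | succ n ih =>
      rw [Finset.sum_Icc_succ_top (by omega)]
      push_cast [pow_succ]
      linear_combination ih

private lemma sinh_zero_iff' (z : ℂ) : Complex.sinh z = 0 ↔ ∃ kk : ℤ, z = kk * Real.pi * I := by
  have h : Complex.sinh z = Complex.sin (z * I) * (-I) := by
    rw [Complex.sin_mul_I]; simp [mul_assoc, Complex.I_mul_I]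
  rw [h, mul_eq_zero]
  simp only [neg_eq_zero, Complex.I_ne_zero, or_false, Complex.sin_eq_zero_iff]
  constructor
  · rintro ⟨kk, h⟩
    refine ⟨-kk, ?_⟩
    have h2 : z * I * I = (kk : ℂ) * Real.pi * I := by rw [h]
    rw [mul_assoc, Complex.I_mul_I] at h2
    push_cast
    linear_combination -h2
  · rintro ⟨kk, h⟩
    refine ⟨-kk, ?_⟩
    rw [h]; push_cast
    linear_combination (kk : ℂ) * Real.pi * Complex.I_mul_I

private lemma pointwise_s19 (m : ℂ) (n : ℕ) (u : ℝ) (hs : Complex.sinh (m * u / 2) ≠ 0) :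
    (Complex.exp (m * n * u) - 1) * Complex.coth (m * u / 2) =
      2 * ∑ j ∈ Finset.Icc 1 n, Complex.exp (m * j * u) + 1 - Complex.exp (m * n * u) := by
  set w : ℂ := m * u / 2 with hw
  set x : ℂ := Complex.exp (m * u) with hx
  have hew : Complex.exp w ≠ 0 := Complex.exp_ne_zero w
  have hx2 : x = Complex.exp w * Complex.exp w := by
    rw [hx, ← Complex.exp_add, hw]; ring_nf
  have hsh := Complex.two_sinh (x := w)
  have hch := Complex.two_cosh (x := w)
  rw [Complex.exp_neg] at hsh hch
  have hxm1 : x - 1 = 2 * Complex.sinh w * Complex.exp w := by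
    rw [hx2]
    field_simp at hsh
    linear_combination -hsh
  have hxp1 : x + 1 = 2 * Complex.cosh w * Complex.exp w := by
    rw [hx2]
    field_simp at hch
    linear_combination -hch
  have hxn : ∀ j : ℕ, Complex.exp (m * j * u) = x ^ j := by
    intro j
    rw [hx, ← Complex.exp_nat_mul]
    ring_nf
  rw [hxn n]
  simp_rw [hxn]
  have h1 := polyid x n
  rw [hxm1, hxp1] at h1
  have h2 : (x ^ n - 1) * Complex.cosh w =
      (2 * ∑ j ∈ Finset.Icc 1 n, x ^ j + 1 - x ^ n) * Complex.sinh w :=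
    mul_right_cancel₀ hew (by linear_combination h1 / 2)
  rw [Complex.coth, ← mul_div_assoc, div_eq_iff hs, h2]

private lemma integral_pow_exp (a : ℂ) (ha : a ≠ 0) (k : ℕ) :
    ∫ u in (0:ℝ)..1, (1 - (u:ℂ)) ^ k * Complex.exp (a * u) =
      (Nat.factorial k) / a ^ (k + 1) *
        (Complex.exp a - ∑ l ∈ Finset.range (k + 1), a ^ l / (Nat.factorial l)) := by
  induction k with
  | zero =>
      simp only [pow_zero, one_mul, integral_exp_mul_complex ha]
      simp [Complex.exp_zero]
      ring
  | succ k ih =>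
      have hu : ∀ x ∈ Set.uIcc (0:ℝ) 1, HasDerivAt (fun x : ℝ => (1 - (x:ℂ)) ^ (k+1))
          (((k:ℂ)+1) * (1 - (x:ℂ)) ^ k * (-1)) x := by
        intro x _
        have h1 : HasDerivAt (fun z : ℂ => (1 - z) ^ (k+1))
            (((k:ℂ)+1) * (1 - (x:ℂ)) ^ k * (-1)) (x : ℂ) := by
          have := ((hasDerivAt_id (x:ℂ)).const_sub 1).fun_pow (k+1)
          simpa [mul_comm, mul_assoc] using this
        exact h1.comp_ofReal
      have hv : ∀ x ∈ Set.uIcc (0:ℝ) 1, HasDerivAt (fun x : ℝ => Complex.exp (a * x) / a)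
          (Complex.exp (a * x)) x := by
        intro x _
        have h1 : HasDerivAt (fun z : ℂ => Complex.exp (a * z) / a)
            (Complex.exp (a * (x:ℂ))) (x : ℂ) := by
          have := (((hasDerivAt_id (x:ℂ)).const_mul a).cexp).div_const a
          simpa [mul_div_assoc, div_self ha] using this
        exact h1.comp_ofReal
      have hInt1 : IntervalIntegrable (fun x : ℝ => ((k:ℂ)+1) * (1 - (x:ℂ)) ^ k * (-1))
          MeasureTheory.volume 0 1 := (Continuous.intervalIntegrable (by fun_prop) _ _)
      have hInt2 : IntervalIntegrable (fun x : ℝ => Complex.exp (a * x))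
          MeasureTheory.volume 0 1 := (Continuous.intervalIntegrable (by fun_prop) _ _)
      have H := integral_mul_deriv_eq_deriv_mul hu hv hInt1 hInt2
      simp only [Complex.ofReal_one, Complex.ofReal_zero, mul_zero, Complex.exp_zero] at H
      rw [H]
      have : (∫ x in (0:ℝ)..1, ((k:ℂ)+1) * (1 - (x:ℂ)) ^ k * (-1) * (Complex.exp (a*x)/a))
          = (-((k:ℂ)+1)/a) * ∫ x in (0:ℝ)..1, (1 - (x:ℂ)) ^ k * Complex.exp (a * x) := by
        rw [← intervalIntegral.integral_const_mul]
        congr 1 with x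
        ring
      rw [this, ih]
      rw [Finset.sum_range_succ _ (k+1)]
      push_cast [Nat.factorial_succ]
      have hak : a ^ (k+1) ≠ 0 := pow_ne_zero _ ha
      have hak2 : a ^ (k+2) ≠ 0 := pow_ne_zero _ ha
      have hkf : ((Nat.factorial k : ℂ)) ≠ 0 := by exact_mod_cast Nat.factorial_ne_zero k
      have hden : ((k:ℂ) * (Nat.factorial k) + (Nat.factorial k)) ≠ 0 := by
        have h1 : ((k:ℂ) + 1) * (Nat.factorial k) ≠ 0 :=
          mul_ne_zero (Nat.cast_add_one_ne_zero k) hkf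
        intro h
        exact h1 (by linear_combination h)
      have key : ((k:ℂ) * (Nat.factorial k) + (Nat.factorial k)) / a ^ (k+2) *
          (a ^ (k+1) / ((k:ℂ) * (Nat.factorial k) + (Nat.factorial k))) = 1 / a := by
        field_simp
        ring
      linear_combination key

theorem stmt_19 (k : ℕ) (hk : 1 ≤ k) (m : ℂ) (hm : m ≠ 0) (n : ℕ) (hn : 0 < n) :
    ∑ j ∈ Finset.Icc 1 n, Complex.exp (m * j) / (j : ℂ) ^ k =
      Complex.exp (m * n) / (2 * (n : ℂ) ^ k)
      - (1 / (2 * (n : ℂ) ^ k)) *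
          ∑ j ∈ Finset.range (k + 1), (m * n) ^ j / (Nat.factorial j)
      + (∑ j ∈ Finset.Icc 1 k,
          (m ^ (k - j) / (Nat.factorial (k - j))) *
            ∑ i ∈ Finset.Icc 1 n, (1 : ℂ) / (i : ℂ) ^ j)
      + (m ^ k / (2 * (Nat.factorial (k - 1)))) *
          ∫ u in (0:ℝ)..1,
            (1 - (u : ℂ)) ^ (k - 1) * (Complex.exp (m * n * u) - 1) *
              Complex.coth (m * u / 2) := by
  obtain ⟨K, rfl⟩ : ∃ K, k = K + 1 := ⟨k - 1, (Nat.succ_pred_eq_of_pos hk).symm⟩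
  simp only [Nat.add_sub_cancel]
  have hnc : (n : ℂ) ≠ 0 := Nat.cast_ne_zero.mpr hn.ne'
  have hKf : ((Nat.factorial K : ℂ)) ≠ 0 := by exact_mod_cast Nat.factorial_ne_zero K
  -- Step 1: replace the integrand a.e.
  have hcount : Set.Countable {u : ℝ | Complex.sinh (m * u / 2) = 0} := by
    apply Set.Countable.mono ?_
      (Set.countable_range fun kk : ℤ => ((2 * (kk:ℂ) * Real.pi * Complex.I) / m).re)
    intro u hu
    obtain ⟨kk, hkk⟩ := (sinh_zero_iff' _).mp hu
    refine ⟨kk, ?_⟩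
    have h2 : (u : ℂ) = 2 * (kk:ℂ) * Real.pi * I / m := by
      rw [eq_div_iff hm]; linear_combination 2 * hkk
    show ((2 * (kk:ℂ) * Real.pi * Complex.I) / m).re = u
    rw [← h2, Complex.ofReal_re]
  have hcongr :
      (∫ u in (0:ℝ)..1, (1 - (u : ℂ)) ^ K * (Complex.exp (m * n * u) - 1) *
        Complex.coth (m * u / 2)) =
      ∫ u in (0:ℝ)..1, (1 - (u : ℂ)) ^ K *
        (2 * ∑ j ∈ Finset.Icc 1 n, Complex.exp (m * j * u) + 1 - Complex.exp (m * n * u)) := by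
    apply intervalIntegral.integral_congr_ae
    filter_upwards [MeasureTheory.measure_eq_zero_iff_ae_notMem.mp
      (hcount.measure_zero MeasureTheory.volume)] with u hu _
    rw [mul_assoc, pointwise_s19 m n u hu]
  -- Step 2: value of the building-block integrals
  have hC : (∫ u in (0:ℝ)..1, ((1:ℂ) - u) ^ K) = 1 / ((K:ℂ) + 1) := by
    have h1 : ∀ u : ℝ, ((1:ℂ) - u) ^ K = ((((1 - u) ^ K : ℝ)) : ℂ) := by
      intro u; push_cast; ring
    simp_rw [h1]
    rw [intervalIntegral.integral_ofReal]
    have h2 := intervalIntegral.integral_comp_sub_left (a := (0:ℝ)) (b := 1)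
      (fun x : ℝ => x ^ K) 1
    norm_num at h2
    rw [h2]
    push_cast
    ring
  have hsplit :
      (∫ u in (0:ℝ)..1, (1 - (u : ℂ)) ^ K *
        (2 * ∑ j ∈ Finset.Icc 1 n, Complex.exp (m * j * u) + 1 - Complex.exp (m * n * u)))
      = 2 * (∑ j ∈ Finset.Icc 1 n,
            ∫ u in (0:ℝ)..1, (1 - (u:ℂ)) ^ K * Complex.exp (m * j * u))
        + (1/((K:ℂ)+1))
        - ∫ u in (0:ℝ)..1, (1 - (u:ℂ)) ^ K * Complex.exp (m * n * u) := by
    have h1 : ∀ u : ℝ, (1 - (u : ℂ)) ^ K *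
        (2 * ∑ j ∈ Finset.Icc 1 n, Complex.exp (m * j * u) + 1 - Complex.exp (m * n * u))
        = (∑ j ∈ Finset.Icc 1 n, 2 * ((1 - (u:ℂ)) ^ K * Complex.exp (m * j * u)))
          + (((1:ℂ) - u) ^ K - (1 - (u:ℂ)) ^ K * Complex.exp (m * n * u)) := by
      intro u
      have hms1 := Finset.mul_sum (Finset.Icc 1 n)
        (fun j : ℕ => Complex.exp (m * j * u)) ((1 - (u:ℂ)) ^ K)
      have hms2 := Finset.mul_sum (Finset.Icc 1 n)
        (fun j : ℕ => (1 - (u:ℂ)) ^ K * Complex.exp (m * j * u)) (2:ℂ)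
      linear_combination 2 * hms1 + hms2
    simp only [h1]
    have hIntSum : IntervalIntegrable
        (fun u : ℝ => ∑ j ∈ Finset.Icc 1 n, 2 * ((1 - (u:ℂ)) ^ K * Complex.exp (m * j * u)))
        MeasureTheory.volume 0 1 := by
      apply Continuous.intervalIntegrable
      exact continuous_finset_sum _ fun j _ => by fun_prop
    have hIntSub : IntervalIntegrable
        (fun u : ℝ => ((1:ℂ) - u) ^ K - (1 - (u:ℂ)) ^ K * Complex.exp (m * n * u))
        MeasureTheory.volume 0 1 := by
      apply Continuous.intervalIntegrable; fun_prop
    rw [intervalIntegral.integral_add hIntSum hIntSub,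
      intervalIntegral.integral_sub
        (by apply Continuous.intervalIntegrable; fun_prop)
        (by apply Continuous.intervalIntegrable; fun_prop),
      intervalIntegral.integral_finset_sum
        (fun j _ => by apply Continuous.intervalIntegrable; fun_prop)]
    simp_rw [intervalIntegral.integral_const_mul]
    rw [← Finset.mul_sum, hC]
    ring
  have hval : ∀ j ∈ Finset.Icc 1 n,
      (∫ u in (0:ℝ)..1, (1 - (u:ℂ)) ^ K * Complex.exp (m * j * u))
      = (Nat.factorial K : ℂ) / (m * (j:ℂ)) ^ (K + 1) *
        (Complex.exp (m * j) - ∑ l ∈ Finset.range (K + 1), (m * (j:ℂ)) ^ l / (Nat.factorial l)) := by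
    intro j hj
    have hj1 : 1 ≤ j := (Finset.mem_Icc.mp hj).1
    have hjne : ((j:ℂ)) ≠ 0 := Nat.cast_ne_zero.mpr (by omega)
    exact integral_pow_exp (m * j) (mul_ne_zero hm hjne) K
  have hvn := integral_pow_exp (m * n) (mul_ne_zero hm hnc) K
  -- Step 3: swapping the double sum
  have hswap : ∑ j ∈ Finset.Icc 1 n,
        (∑ l ∈ Finset.range (K+1), (m * (j:ℂ)) ^ l / (Nat.factorial l)) / (j:ℂ) ^ (K+1)
      = ∑ j ∈ Finset.Icc 1 (K+1),
          (m ^ (K+1-j) / (Nat.factorial (K+1-j))) * ∑ i ∈ Finset.Icc 1 n, (1:ℂ) / (i:ℂ) ^ j := by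
    have step1 : ∀ j ∈ Finset.Icc 1 n,
        (∑ l ∈ Finset.range (K+1), (m * (j:ℂ)) ^ l / (Nat.factorial l)) / (j:ℂ) ^ (K+1)
        = ∑ l ∈ Finset.range (K+1),
            m ^ l / (Nat.factorial l) * ((1:ℂ) / (j:ℂ) ^ (K+1-l)) := by
      intro j hj
      rw [Finset.sum_div]
      refine Finset.sum_congr rfl fun l hl => ?_
      have hj1 : 1 ≤ j := (Finset.mem_Icc.mp hj).1
      have hjne : ((j:ℂ)) ≠ 0 := Nat.cast_ne_zero.mpr (by omega)
      have hlK : l ≤ K := by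
        have := Finset.mem_range.mp hl; omega
      have hp : (j:ℂ) ^ (K+1) = (j:ℂ) ^ l * (j:ℂ) ^ (K+1-l) := by
        rw [← pow_add]; congr 1; omega
      have hfl : ((Nat.factorial l : ℂ)) ≠ 0 := by exact_mod_cast Nat.factorial_ne_zero l
      rw [mul_pow, hp]
      field_simp
    rw [Finset.sum_congr rfl step1, Finset.sum_comm]
    simp_rw [← Finset.mul_sum]
    refine Finset.sum_nbij' (fun x => K + 1 - x) (fun j => K + 1 - j) ?_ ?_ ?_ ?_ ?_
    · intro x hx; simp only [Finset.mem_range] at hx; simp only [Finset.mem_Icc]; omega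
    · intro j hj; simp only [Finset.mem_Icc] at hj; simp only [Finset.mem_range]; omega
    · intro x hx; simp only [Finset.mem_range] at hx
      show K + 1 - (K + 1 - x) = x; omega
    · intro j hj; simp only [Finset.mem_Icc] at hj
      show K + 1 - (K + 1 - j) = j; omega
    · intro x hx
      simp only [Finset.mem_range] at hx
      have e1 : K + 1 - (K + 1 - x) = x := by omega
      rw [e1]
  -- Step 4: algebra
  have hA : (m^(K+1) / (2 * (Nat.factorial K : ℂ))) *
        (2 * ∑ j ∈ Finset.Icc 1 n, ((Nat.factorial K : ℂ) / (m * (j:ℂ)) ^ (K+1) *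
          (Complex.exp (m * j) - ∑ l ∈ Finset.range (K+1), (m * (j:ℂ)) ^ l / (Nat.factorial l))))
      = (∑ j ∈ Finset.Icc 1 n, Complex.exp (m * j) / (j:ℂ) ^ (K+1))
        - ∑ j ∈ Finset.Icc 1 n,
            (∑ l ∈ Finset.range (K+1), (m * (j:ℂ)) ^ l / (Nat.factorial l)) / (j:ℂ) ^ (K+1) := by
    rw [Finset.mul_sum, Finset.mul_sum, ← Finset.sum_sub_distrib]
    refine Finset.sum_congr rfl fun j hj => ?_
    have hj1 : 1 ≤ j := (Finset.mem_Icc.mp hj).1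
    have hjne : ((j:ℂ)) ≠ 0 := Nat.cast_ne_zero.mpr (by omega)
    rw [mul_pow]
    field_simp
  have hE : ∀ X : ℂ, (m^(K+1) / (2 * (Nat.factorial K : ℂ))) *
        ((Nat.factorial K : ℂ) / (m * (n:ℂ)) ^ (K+1) * X) = X / (2 * (n:ℂ) ^ (K+1)) := by
    intro X
    rw [mul_pow]
    field_simp
  have hc : m^(K+1) / (2 * (Nat.factorial K : ℂ)) * (1/((K:ℂ)+1))
      = 1 / (2 * (n:ℂ)^(K+1)) * ((m * (n:ℂ))^(K+1) / ((Nat.factorial (K+1) : ℂ))) := by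
    have hK1 : ((K:ℂ) + 1) ≠ 0 := Nat.cast_add_one_ne_zero K
    rw [mul_pow, Nat.factorial_succ]
    push_cast
    field_simp
  rw [hcongr, hsplit, Finset.sum_congr rfl hval, hvn, Finset.sum_range_succ]
  linear_combination -hA + hswap - hc + hE (Complex.exp (m * n)
    - ∑ l ∈ Finset.range (K+1), (m * (n:ℂ)) ^ l / (Nat.factorial l))
end
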